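/- arXiv:2504.20470 — 2 statements merged into one kernel-verified Lean document; each statement's English description precedes it below -/
import Mathlib

section
/- Identifiability of the joint distribution of all potential outcomes with a post-treatment variable (Corollary 3): Suppose two models (Ω, ℱ, μ, G, A, S⁰, S¹, Y⁰, Y¹) and (Ω', ℱ', μ', G', A', S'⁰, S'¹, Y'⁰, Y'¹) each satisfy Assumption 5, Assumption 6, and Condition 3, and have the same observed data distribution, i.e. μ(G=g, A=a, S=s, Y=y) = μ'(G'=g, A'=a, S'=s, Y'=y) for all g ∈ Fin m and a, s, y ∈ {0,1}. Then for all a, b, c, d ∈ {0,1} and every g: P(S⁰=a, S¹=b, Y⁰=c, Y¹=d | G=g) = P'(S'⁰=a, S'¹=b, Y'⁰=c, Y'¹=d | G'=g); consequently the principal stratification average causal effects PSACE_{ab|g} are identified whenever μ(S⁰=a, S¹=b, G=g) > 0. -/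
open MeasureTheory ProbabilityTheory

/-- Conditional probability `P(E | F) = μ(E ∩ F) / μ(F)` as a real number. -/
noncomputable def condP {Ω : Type*} [MeasurableSpace Ω] (μ : Measure Ω) (E F : Set Ω) : ℝ :=
  (μ (E ∩ F)).toReal / (μ F).toReal

lemma mset {Ω β : Type*} [MeasurableSpace Ω] [MeasurableSpace β] [MeasurableSingletonClass β]
    {f : Ω → β} (hf : Measurable f) (b : β) : MeasurableSet {ω | f ω = b} :=
  hf (measurableSet_singleton b)

lemma toReal_meas_sum {Ω α : Type*} [MeasurableSpace Ω] (μ : Measure Ω) [IsFiniteMeasure μ]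
    [Fintype α] [MeasurableSpace α] [MeasurableSingletonClass α]
    {f : Ω → α} (hf : Measurable f) {E : Set Ω} (hE : MeasurableSet E) :
    (μ E).toReal = ∑ a : α, (μ (E ∩ {ω | f ω = a})).toReal := by
  have hd : Pairwise (Function.onFun Disjoint fun a : α => E ∩ {ω | f ω = a}) := by
    intro a b hab
    simp only [Function.onFun, Set.disjoint_left]
    rintro ω ⟨-, h1⟩ ⟨-, h2⟩
    exact hab (h1.symm.trans h2)
  have h2 : μ E = ∑ a : α, μ (E ∩ {ω | f ω = a}) := by
    calc μ E = μ (⋃ a : α, E ∩ {ω | f ω = a}) := by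
          congr 1; ext ω; simp
      _ = ∑' a : α, μ (E ∩ {ω | f ω = a}) :=
          measure_iUnion hd fun a => hE.inter (mset hf a)
      _ = _ := tsum_fintype _
  rw [h2, ENNReal.toReal_sum]
  intro a _; exact measure_ne_top μ _

lemma model_facts {Ω : Type*} [MeasurableSpace Ω]
    (μ : Measure Ω) [IsProbabilityMeasure μ]
    {m : ℕ}
    (G : Ω → Fin m) (A S0 S1 Y0 Y1 S Y : Ω → Bool)
    (hGmeas : Measurable G) (hAmeas : Measurable A)
    (hS0meas : Measurable S0) (hS1meas : Measurable S1)
    (hY0meas : Measurable Y0) (hY1meas : Measurable Y1)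
    (hSdef : ∀ ω, S ω = bif A ω then S1 ω else S0 ω)
    (hYdef : ∀ ω, Y ω = bif A ω then Y1 ω else Y0 ω)
    (hA5pos : ∀ g : Fin m, 0 < μ {ω | G ω = g})
    (hA5ov : ∀ g : Fin m, 0 < condP μ {ω | A ω = true} {ω | G ω = g} ∧
        condP μ {ω | A ω = true} {ω | G ω = g} < 1)
    (hA5ind : ∀ (g : Fin m) (a s0 s1 y0 y1 : Bool),
      condP μ {ω | A ω = a ∧ S0 ω = s0 ∧ S1 ω = s1 ∧ Y0 ω = y0 ∧ Y1 ω = y1} {ω | G ω = g} =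
        condP μ {ω | A ω = a} {ω | G ω = g} *
          condP μ {ω | S0 ω = s0 ∧ S1 ω = s1 ∧ Y0 ω = y0 ∧ Y1 ω = y1} {ω | G ω = g})
    (hA6 : ∀ (a b c d : Bool) (g : Fin m), 0 < μ {ω | S0 ω = a ∧ Y0 ω = c ∧ G ω = g} →
      condP μ {ω | S1 ω = b ∧ Y1 ω = d} {ω | S0 ω = a ∧ Y0 ω = c ∧ G ω = g} =
        condP μ {ω | S1 ω = b ∧ Y1 ω = d} {ω | S0 ω = a ∧ Y0 ω = c}) :
    (∀ g a c, condP μ {ω | S0 ω = a ∧ Y0 ω = c} {ω | G ω = g} =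
        (μ {ω | G ω = g ∧ A ω = false ∧ S ω = a ∧ Y ω = c}).toReal /
        ∑ p : Bool × Bool, (μ {ω | G ω = g ∧ A ω = false ∧ S ω = p.1 ∧ Y ω = p.2}).toReal) ∧
    (∀ g b d, condP μ {ω | S1 ω = b ∧ Y1 ω = d} {ω | G ω = g} =
        (μ {ω | G ω = g ∧ A ω = true ∧ S ω = b ∧ Y ω = d}).toReal /
        ∑ p : Bool × Bool, (μ {ω | G ω = g ∧ A ω = true ∧ S ω = p.1 ∧ Y ω = p.2}).toReal) ∧
    (∀ g b d, condP μ {ω | S1 ω = b ∧ Y1 ω = d} {ω | G ω = g} =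
        ∑ p : Bool × Bool,
          condP μ {ω | S1 ω = b ∧ Y1 ω = d} {ω | S0 ω = p.1 ∧ Y0 ω = p.2} *
            condP μ {ω | S0 ω = p.1 ∧ Y0 ω = p.2} {ω | G ω = g}) ∧
    (∀ a b c d g, condP μ {ω | S0 ω = a ∧ S1 ω = b ∧ Y0 ω = c ∧ Y1 ω = d} {ω | G ω = g} =
        condP μ {ω | S1 ω = b ∧ Y1 ω = d} {ω | S0 ω = a ∧ Y0 ω = c} *
          condP μ {ω | S0 ω = a ∧ Y0 ω = c} {ω | G ω = g}) ∧
    (∀ a b g, (μ ({ω | Y1 ω = true} ∩ {ω | S0 ω = a ∧ S1 ω = b ∧ G ω = g})).toReal =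
        (∑ c : Bool,
          condP μ {ω | S0 ω = a ∧ S1 ω = b ∧ Y0 ω = c ∧ Y1 ω = true} {ω | G ω = g}) *
          (μ {ω | G ω = g}).toReal) ∧
    (∀ a b g, (μ ({ω | Y0 ω = true} ∩ {ω | S0 ω = a ∧ S1 ω = b ∧ G ω = g})).toReal =
        (∑ d : Bool,
          condP μ {ω | S0 ω = a ∧ S1 ω = b ∧ Y0 ω = true ∧ Y1 ω = d} {ω | G ω = g}) *
          (μ {ω | G ω = g}).toReal) ∧
    (∀ a b g, (μ {ω | S0 ω = a ∧ S1 ω = b ∧ G ω = g}).toReal =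
        (∑ p : Bool × Bool,
          condP μ {ω | S0 ω = a ∧ S1 ω = b ∧ Y0 ω = p.1 ∧ Y1 ω = p.2} {ω | G ω = g}) *
          (μ {ω | G ω = g}).toReal) ∧
    (∀ g, (μ {ω | G ω = g}).toReal =
        ∑ q : Bool × Bool × Bool,
          (μ {ω | G ω = g ∧ A ω = q.1 ∧ S ω = q.2.1 ∧ Y ω = q.2.2}).toReal) := by
  -- measurability of S and Y
  have hSmeas : Measurable S := by
    have : S = fun ω => if A ω = true then S1 ω else S0 ω := by
      funext ω; rw [hSdef ω]; cases A ω <;> simp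
    rw [this]; exact Measurable.ite (mset hAmeas true) hS1meas hS0meas
  have hYmeas : Measurable Y := by
    have : Y = fun ω => if A ω = true then Y1 ω else Y0 ω := by
      funext ω; rw [hYdef ω]; cases A ω <;> simp
    rw [this]; exact Measurable.ite (mset hAmeas true) hY1meas hY0meas
  have DGne : ∀ g : Fin m, (μ {ω | G ω = g}).toReal ≠ 0 := fun g =>
    (ENNReal.toReal_pos (hA5pos g).ne' (measure_ne_top μ _)).ne'
  -- condP A=true + condP A=false = 1
  have hAsum : ∀ g, condP μ {ω | A ω = true} {ω | G ω = g} +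
      condP μ {ω | A ω = false} {ω | G ω = g} = 1 := by
    intro g
    unfold condP
    rw [← add_div]
    have : (μ {ω | G ω = g}).toReal =
        ∑ a : Bool, (μ ({ω | G ω = g} ∩ {ω | A ω = a})).toReal :=
      toReal_meas_sum μ hAmeas (mset hGmeas g)
    rw [show (μ ({ω | A ω = true} ∩ {ω | G ω = g})).toReal +
          (μ ({ω | A ω = false} ∩ {ω | G ω = g})).toReal = (μ {ω | G ω = g}).toReal by
      rw [this, Fintype.sum_bool]
      simp only [Set.inter_comm {ω | G ω = g}]]
    exact div_self (DGne g)
  have hAfpos : ∀ g, 0 < condP μ {ω | A ω = false} {ω | G ω = g} := by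
    intro g
    have h1 := (hA5ov g).2
    have h2 := hAsum g
    linarith
  have hAtpos : ∀ g, 0 < condP μ {ω | A ω = true} {ω | G ω = g} := fun g => (hA5ov g).1
  -- F2 : independence of A and (S0, Y0) resp. (S1, Y1)
  have F2 : ∀ (g : Fin m) (a s0 y0 : Bool),
      condP μ {ω | A ω = a ∧ S0 ω = s0 ∧ Y0 ω = y0} {ω | G ω = g} =
        condP μ {ω | A ω = a} {ω | G ω = g} *
          condP μ {ω | S0 ω = s0 ∧ Y0 ω = y0} {ω | G ω = g} := by
    intro g a s0 y0
    have hnum : (μ ({ω | A ω = a ∧ S0 ω = s0 ∧ Y0 ω = y0} ∩ {ω | G ω = g})).toReal =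
        ∑ p : Bool × Bool,
          (μ ({ω | A ω = a ∧ S0 ω = s0 ∧ S1 ω = p.1 ∧ Y0 ω = y0 ∧ Y1 ω = p.2} ∩
             {ω | G ω = g})).toReal := by
      rw [toReal_meas_sum μ (hS1meas.prodMk hY1meas)
        (E := {ω | A ω = a ∧ S0 ω = s0 ∧ Y0 ω = y0} ∩ {ω | G ω = g})
        (((mset hAmeas a).inter ((mset hS0meas s0).inter (mset hY0meas y0))).inter
          (mset hGmeas g))]
      refine Finset.sum_congr rfl fun p _ => ?_
      congr 2
      ext ω
      simp only [Set.mem_inter_iff, Set.mem_setOf_eq, Prod.ext_iff]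
      tauto
    have h0num : (μ ({ω | S0 ω = s0 ∧ Y0 ω = y0} ∩ {ω | G ω = g})).toReal =
        ∑ p : Bool × Bool,
          (μ ({ω | S0 ω = s0 ∧ S1 ω = p.1 ∧ Y0 ω = y0 ∧ Y1 ω = p.2} ∩
             {ω | G ω = g})).toReal := by
      rw [toReal_meas_sum μ (hS1meas.prodMk hY1meas)
        (E := {ω | S0 ω = s0 ∧ Y0 ω = y0} ∩ {ω | G ω = g})
        (((mset hS0meas s0).inter (mset hY0meas y0)).inter (mset hGmeas g))]
      refine Finset.sum_congr rfl fun p _ => ?_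
      congr 2
      ext ω
      simp only [Set.mem_inter_iff, Set.mem_setOf_eq, Prod.ext_iff]
      tauto
    have key := fun p : Bool × Bool => hA5ind g a s0 p.1 y0 p.2
    unfold condP at key ⊢
    rw [hnum, h0num, Finset.sum_div, Finset.sum_div, Finset.mul_sum]
    exact Finset.sum_congr rfl fun p _ => key p
  -- base : transported transition times base measure
  have base : ∀ (b d a c : Bool) (g : Fin m),
      (μ ({ω | S1 ω = b ∧ Y1 ω = d} ∩ {ω | S0 ω = a ∧ Y0 ω = c ∧ G ω = g})).toReal =
        condP μ {ω | S1 ω = b ∧ Y1 ω = d} {ω | S0 ω = a ∧ Y0 ω = c} *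
          (μ {ω | S0 ω = a ∧ Y0 ω = c ∧ G ω = g}).toReal := by
    intro b d a c g
    by_cases h : μ {ω | S0 ω = a ∧ Y0 ω = c ∧ G ω = g} = 0
    · have h2 : μ ({ω | S1 ω = b ∧ Y1 ω = d} ∩ {ω | S0 ω = a ∧ Y0 ω = c ∧ G ω = g}) = 0 :=
        measure_mono_null Set.inter_subset_right h
      rw [h, h2]; simp
    · have hpos : 0 < μ {ω | S0 ω = a ∧ Y0 ω = c ∧ G ω = g} := pos_iff_ne_zero.mpr h
      have hB : (μ {ω | S0 ω = a ∧ Y0 ω = c ∧ G ω = g}).toReal ≠ 0 :=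
        (ENNReal.toReal_pos h (measure_ne_top μ _)).ne'
      have := hA6 a b c d g hpos
      rw [← this]
      unfold condP
      rw [div_mul_cancel₀ _ hB]
  have baseG : ∀ (a c : Bool) (g : Fin m),
      μ {ω | S0 ω = a ∧ Y0 ω = c ∧ G ω = g} =
        μ ({ω | S0 ω = a ∧ Y0 ω = c} ∩ {ω | G ω = g}) := by
    intro a c g; congr 1; ext ω
    simp only [Set.mem_inter_iff, Set.mem_setOf_eq]; tauto
  -- F1 : independence of A and (S1, Y1)
  have F1 : ∀ (g : Fin m) (a s1 y1 : Bool),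
      condP μ {ω | A ω = a ∧ S1 ω = s1 ∧ Y1 ω = y1} {ω | G ω = g} =
        condP μ {ω | A ω = a} {ω | G ω = g} *
          condP μ {ω | S1 ω = s1 ∧ Y1 ω = y1} {ω | G ω = g} := by
    intro g a s1 y1
    have hnum : (μ ({ω | A ω = a ∧ S1 ω = s1 ∧ Y1 ω = y1} ∩ {ω | G ω = g})).toReal =
        ∑ p : Bool × Bool,
          (μ ({ω | A ω = a ∧ S0 ω = p.1 ∧ S1 ω = s1 ∧ Y0 ω = p.2 ∧ Y1 ω = y1} ∩
             {ω | G ω = g})).toReal := by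
      rw [toReal_meas_sum μ (hS0meas.prodMk hY0meas)
        (E := {ω | A ω = a ∧ S1 ω = s1 ∧ Y1 ω = y1} ∩ {ω | G ω = g})
        (((mset hAmeas a).inter ((mset hS1meas s1).inter (mset hY1meas y1))).inter
          (mset hGmeas g))]
      refine Finset.sum_congr rfl fun p _ => ?_
      congr 2
      ext ω
      simp only [Set.mem_inter_iff, Set.mem_setOf_eq, Prod.ext_iff]
      tauto
    have h0num : (μ ({ω | S1 ω = s1 ∧ Y1 ω = y1} ∩ {ω | G ω = g})).toReal =
        ∑ p : Bool × Bool,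
          (μ ({ω | S0 ω = p.1 ∧ S1 ω = s1 ∧ Y0 ω = p.2 ∧ Y1 ω = y1} ∩
             {ω | G ω = g})).toReal := by
      rw [toReal_meas_sum μ (hS0meas.prodMk hY0meas)
        (E := {ω | S1 ω = s1 ∧ Y1 ω = y1} ∩ {ω | G ω = g})
        (((mset hS1meas s1).inter (mset hY1meas y1)).inter (mset hGmeas g))]
      refine Finset.sum_congr rfl fun p _ => ?_
      congr 2
      ext ω
      simp only [Set.mem_inter_iff, Set.mem_setOf_eq, Prod.ext_iff]
      tauto
    have key := fun p : Bool × Bool => hA5ind g a p.1 s1 p.2 y1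
    unfold condP at key ⊢
    rw [hnum, h0num, Finset.sum_div, Finset.sum_div, Finset.mul_sum]
    exact Finset.sum_congr rfl fun p _ => key p
  have hDGpos : ∀ g : Fin m, (0:ℝ) < (μ {ω | G ω = g}).toReal := fun g =>
    ENNReal.toReal_pos (hA5pos g).ne' (measure_ne_top μ _)
  refine ⟨?_, ?_, ?_, ?_, ?_, ?_, ?_, ?_⟩
  · -- conjunct 1 : M formula
    intro g a c
    have hobs : ∀ s y : Bool, μ {ω | G ω = g ∧ A ω = false ∧ S ω = s ∧ Y ω = y} =
        μ ({ω | A ω = false ∧ S0 ω = s ∧ Y0 ω = y} ∩ {ω | G ω = g}) := by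
      intro s y; congr 1; ext ω
      simp only [Set.mem_setOf_eq, Set.mem_inter_iff]
      constructor
      · rintro ⟨hg, ha, hs, hy⟩
        rw [hSdef ω, ha] at hs; rw [hYdef ω, ha] at hy
        simp only [Bool.cond_false] at hs hy
        exact ⟨⟨ha, hs, hy⟩, hg⟩
      · rintro ⟨⟨ha, hs, hy⟩, hg⟩
        refine ⟨hg, ha, ?_, ?_⟩
        · rw [hSdef ω, ha]; simpa using hs
        · rw [hYdef ω, ha]; simpa using hy
    have hr : ∑ p : Bool × Bool,
        (μ {ω | G ω = g ∧ A ω = false ∧ S ω = p.1 ∧ Y ω = p.2}).toReal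
        = (μ ({ω | A ω = false} ∩ {ω | G ω = g})).toReal := by
      rw [toReal_meas_sum μ (hSmeas.prodMk hYmeas)
        (E := {ω | A ω = false} ∩ {ω | G ω = g})
        ((mset hAmeas false).inter (mset hGmeas g))]
      refine Finset.sum_congr rfl fun p _ => ?_
      congr 2
      ext ω
      simp only [Set.mem_inter_iff, Set.mem_setOf_eq, Prod.ext_iff]
      tauto
    rw [hr, hobs a c]
    have hF := F2 g false a c
    have hAf := hAfpos g
    have hr0pos : (0:ℝ) < (μ ({ω | A ω = false} ∩ {ω | G ω = g})).toReal := by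
      unfold condP at hAf
      by_contra hcon
      push_neg at hcon
      have h0 : (μ ({ω | A ω = false} ∩ {ω | G ω = g})).toReal = 0 :=
        le_antisymm hcon ENNReal.toReal_nonneg
      rw [h0] at hAf
      simp at hAf
    unfold condP at hF hAf ⊢
    rw [div_eq_div_iff (DGne g) hr0pos.ne']
    have hg0 := hDGpos g
    field_simp at hF
    nlinarith [hF, hg0]
  · -- conjunct 2 : R formula
    intro g b d
    have hobs : ∀ s y : Bool, μ {ω | G ω = g ∧ A ω = true ∧ S ω = s ∧ Y ω = y} =
        μ ({ω | A ω = true ∧ S1 ω = s ∧ Y1 ω = y} ∩ {ω | G ω = g}) := by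
      intro s y; congr 1; ext ω
      simp only [Set.mem_setOf_eq, Set.mem_inter_iff]
      constructor
      · rintro ⟨hg, ha, hs, hy⟩
        rw [hSdef ω, ha] at hs; rw [hYdef ω, ha] at hy
        simp only [Bool.cond_true] at hs hy
        exact ⟨⟨ha, hs, hy⟩, hg⟩
      · rintro ⟨⟨ha, hs, hy⟩, hg⟩
        refine ⟨hg, ha, ?_, ?_⟩
        · rw [hSdef ω, ha]; simpa using hs
        · rw [hYdef ω, ha]; simpa using hy
    have hr : ∑ p : Bool × Bool,
        (μ {ω | G ω = g ∧ A ω = true ∧ S ω = p.1 ∧ Y ω = p.2}).toReal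
        = (μ ({ω | A ω = true} ∩ {ω | G ω = g})).toReal := by
      rw [toReal_meas_sum μ (hSmeas.prodMk hYmeas)
        (E := {ω | A ω = true} ∩ {ω | G ω = g})
        ((mset hAmeas true).inter (mset hGmeas g))]
      refine Finset.sum_congr rfl fun p _ => ?_
      congr 2
      ext ω
      simp only [Set.mem_inter_iff, Set.mem_setOf_eq, Prod.ext_iff]
      tauto
    rw [hr, hobs b d]
    have hF := F1 g true b d
    have hAt := hAtpos g
    have hr0pos : (0:ℝ) < (μ ({ω | A ω = true} ∩ {ω | G ω = g})).toReal := by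
      unfold condP at hAt
      by_contra hcon
      push_neg at hcon
      have h0 : (μ ({ω | A ω = true} ∩ {ω | G ω = g})).toReal = 0 :=
        le_antisymm hcon ENNReal.toReal_nonneg
      rw [h0] at hAt
      simp at hAt
    unfold condP at hF hAt ⊢
    rw [div_eq_div_iff (DGne g) hr0pos.ne']
    have hg0 := hDGpos g
    field_simp at hF
    nlinarith [hF, hg0]
  · -- conjunct 3 : mixing
    intro g b d
    have hnum : (μ ({ω | S1 ω = b ∧ Y1 ω = d} ∩ {ω | G ω = g})).toReal =
        ∑ p : Bool × Bool,
          (μ ({ω | S1 ω = b ∧ Y1 ω = d} ∩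
            {ω | S0 ω = p.1 ∧ Y0 ω = p.2 ∧ G ω = g})).toReal := by
      rw [toReal_meas_sum μ (hS0meas.prodMk hY0meas)
        (E := {ω | S1 ω = b ∧ Y1 ω = d} ∩ {ω | G ω = g})
        (((mset hS1meas b).inter (mset hY1meas d)).inter (mset hGmeas g))]
      refine Finset.sum_congr rfl fun p _ => ?_
      congr 2
      ext ω
      simp only [Set.mem_inter_iff, Set.mem_setOf_eq, Prod.ext_iff]
      tauto
    have step : condP μ {ω | S1 ω = b ∧ Y1 ω = d} {ω | G ω = g} =
        ∑ p : Bool × Bool,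
          (μ ({ω | S1 ω = b ∧ Y1 ω = d} ∩
            {ω | S0 ω = p.1 ∧ Y0 ω = p.2 ∧ G ω = g})).toReal / (μ {ω | G ω = g}).toReal := by
      unfold condP
      rw [hnum, Finset.sum_div]
    rw [step]
    refine Finset.sum_congr rfl fun p _ => ?_
    rw [base b d p.1 p.2 g, baseG p.1 p.2 g]
    unfold condP
    ring
  · -- conjunct 4 : joint factorization
    intro a b c d g
    have hset : μ ({ω | S0 ω = a ∧ S1 ω = b ∧ Y0 ω = c ∧ Y1 ω = d} ∩ {ω | G ω = g}) =
        μ ({ω | S1 ω = b ∧ Y1 ω = d} ∩ {ω | S0 ω = a ∧ Y0 ω = c ∧ G ω = g}) := by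
      congr 1; ext ω
      simp only [Set.mem_inter_iff, Set.mem_setOf_eq]; tauto
    have step : condP μ {ω | S0 ω = a ∧ S1 ω = b ∧ Y0 ω = c ∧ Y1 ω = d} {ω | G ω = g} =
        (μ ({ω | S1 ω = b ∧ Y1 ω = d} ∩
          {ω | S0 ω = a ∧ Y0 ω = c ∧ G ω = g})).toReal / (μ {ω | G ω = g}).toReal := by
      unfold condP
      rw [hset]
    rw [step, base b d a c g, baseG a c g]
    unfold condP
    ring
  · -- conjunct 5 : Y1 numerator
    intro a b g
    have h1 : (μ ({ω | Y1 ω = true} ∩ {ω | S0 ω = a ∧ S1 ω = b ∧ G ω = g})).toReal =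
        ∑ c : Bool,
          (μ ({ω | S0 ω = a ∧ S1 ω = b ∧ Y0 ω = c ∧ Y1 ω = true} ∩ {ω | G ω = g})).toReal := by
      rw [toReal_meas_sum μ hY0meas
        (E := {ω | Y1 ω = true} ∩ {ω | S0 ω = a ∧ S1 ω = b ∧ G ω = g})
        ((mset hY1meas true).inter
          ((mset hS0meas a).inter ((mset hS1meas b).inter (mset hGmeas g))))]
      refine Finset.sum_congr rfl fun c _ => ?_
      congr 2
      ext ω
      simp only [Set.mem_inter_iff, Set.mem_setOf_eq]
      tauto
    rw [h1, Finset.sum_mul]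
    refine Finset.sum_congr rfl fun c _ => ?_
    unfold condP
    rw [div_mul_cancel₀ _ (DGne g)]
  · -- conjunct 6 : Y0 numerator
    intro a b g
    have h1 : (μ ({ω | Y0 ω = true} ∩ {ω | S0 ω = a ∧ S1 ω = b ∧ G ω = g})).toReal =
        ∑ d : Bool,
          (μ ({ω | S0 ω = a ∧ S1 ω = b ∧ Y0 ω = true ∧ Y1 ω = d} ∩ {ω | G ω = g})).toReal := by
      rw [toReal_meas_sum μ hY1meas
        (E := {ω | Y0 ω = true} ∩ {ω | S0 ω = a ∧ S1 ω = b ∧ G ω = g})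
        ((mset hY0meas true).inter
          ((mset hS0meas a).inter ((mset hS1meas b).inter (mset hGmeas g))))]
      refine Finset.sum_congr rfl fun d _ => ?_
      congr 2
      ext ω
      simp only [Set.mem_inter_iff, Set.mem_setOf_eq]
      tauto
    rw [h1, Finset.sum_mul]
    refine Finset.sum_congr rfl fun d _ => ?_
    unfold condP
    rw [div_mul_cancel₀ _ (DGne g)]
  · -- conjunct 7 : denominator
    intro a b g
    have h1 : (μ {ω | S0 ω = a ∧ S1 ω = b ∧ G ω = g}).toReal =
        ∑ p : Bool × Bool,
          (μ ({ω | S0 ω = a ∧ S1 ω = b ∧ Y0 ω = p.1 ∧ Y1 ω = p.2} ∩ {ω | G ω = g})).toReal := by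
      rw [toReal_meas_sum μ (hY0meas.prodMk hY1meas)
        (E := {ω | S0 ω = a ∧ S1 ω = b ∧ G ω = g})
        ((mset hS0meas a).inter ((mset hS1meas b).inter (mset hGmeas g)))]
      refine Finset.sum_congr rfl fun p _ => ?_
      congr 2
      ext ω
      simp only [Set.mem_inter_iff, Set.mem_setOf_eq, Prod.ext_iff]
      tauto
    rw [h1, Finset.sum_mul]
    refine Finset.sum_congr rfl fun p _ => ?_
    unfold condP
    rw [div_mul_cancel₀ _ (DGne g)]
  · -- conjunct 8 : total mass of G = g
    intro g
    rw [toReal_meas_sum μ (hAmeas.prodMk (hSmeas.prodMk hYmeas)) (mset hGmeas g)]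
    refine Finset.sum_congr rfl fun q _ => ?_
    congr 2
    ext ω
    simp only [Set.mem_inter_iff, Set.mem_setOf_eq, Prod.ext_iff]

/-- **Corollary 3.** With a binary post-treatment variable `S`, under Assumption 5,
Assumption 6 (transportability of the transition probabilities from `(S⁰, Y⁰)` to
`(S¹, Y¹)`), and Condition 3 (`m ≥ 4` plus a full-column rank condition), the joint
distributions `P(S⁰, S¹, Y⁰, Y¹ | G = g)` are identified from the observed data
distribution; consequently the principal stratification average causal effects
`PSACE_{ab|g}` are identified whenever `μ(S⁰=a, S¹=b, G=g) > 0`. -/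
theorem stmt5
    {Ω Ω' : Type*} [MeasurableSpace Ω] [MeasurableSpace Ω']
    (μ : Measure Ω) (μ' : Measure Ω')
    [IsProbabilityMeasure μ] [IsProbabilityMeasure μ']
    {m : ℕ} (hm : 1 ≤ m)
    (G : Ω → Fin m) (A S0 S1 Y0 Y1 S Y : Ω → Bool)
    (G' : Ω' → Fin m) (A' S0' S1' Y0' Y1' S' Y' : Ω' → Bool)
    (hGmeas : Measurable G) (hAmeas : Measurable A)
    (hS0meas : Measurable S0) (hS1meas : Measurable S1)
    (hY0meas : Measurable Y0) (hY1meas : Measurable Y1)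
    (hG'meas : Measurable G') (hA'meas : Measurable A')
    (hS0'meas : Measurable S0') (hS1'meas : Measurable S1')
    (hY0'meas : Measurable Y0') (hY1'meas : Measurable Y1')
    (hSdef : ∀ ω, S ω = bif A ω then S1 ω else S0 ω)
    (hYdef : ∀ ω, Y ω = bif A ω then Y1 ω else Y0 ω)
    (hS'def : ∀ ω, S' ω = bif A' ω then S1' ω else S0' ω)
    (hY'def : ∀ ω, Y' ω = bif A' ω then Y1' ω else Y0' ω)
    -- Assumption 5 for μ
    (hA5pos : ∀ g : Fin m, 0 < μ {ω | G ω = g})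
    (hA5ov : ∀ g : Fin m, 0 < condP μ {ω | A ω = true} {ω | G ω = g} ∧
        condP μ {ω | A ω = true} {ω | G ω = g} < 1)
    (hA5ind : ∀ (g : Fin m) (a s0 s1 y0 y1 : Bool),
      condP μ {ω | A ω = a ∧ S0 ω = s0 ∧ S1 ω = s1 ∧ Y0 ω = y0 ∧ Y1 ω = y1} {ω | G ω = g} =
        condP μ {ω | A ω = a} {ω | G ω = g} *
          condP μ {ω | S0 ω = s0 ∧ S1 ω = s1 ∧ Y0 ω = y0 ∧ Y1 ω = y1} {ω | G ω = g})
    -- Assumption 5 for μ'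
    (hA5pos' : ∀ g : Fin m, 0 < μ' {ω | G' ω = g})
    (hA5ov' : ∀ g : Fin m, 0 < condP μ' {ω | A' ω = true} {ω | G' ω = g} ∧
        condP μ' {ω | A' ω = true} {ω | G' ω = g} < 1)
    (hA5ind' : ∀ (g : Fin m) (a s0 s1 y0 y1 : Bool),
      condP μ' {ω | A' ω = a ∧ S0' ω = s0 ∧ S1' ω = s1 ∧ Y0' ω = y0 ∧ Y1' ω = y1}
          {ω | G' ω = g} =
        condP μ' {ω | A' ω = a} {ω | G' ω = g} *
          condP μ' {ω | S0' ω = s0 ∧ S1' ω = s1 ∧ Y0' ω = y0 ∧ Y1' ω = y1} {ω | G' ω = g})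
    -- Assumption 6 for μ
    (hA6pos : ∀ a c : Bool, 0 < μ {ω | S0 ω = a ∧ Y0 ω = c})
    (hA6 : ∀ (a b c d : Bool) (g : Fin m), 0 < μ {ω | S0 ω = a ∧ Y0 ω = c ∧ G ω = g} →
      condP μ {ω | S1 ω = b ∧ Y1 ω = d} {ω | S0 ω = a ∧ Y0 ω = c ∧ G ω = g} =
        condP μ {ω | S1 ω = b ∧ Y1 ω = d} {ω | S0 ω = a ∧ Y0 ω = c})
    -- Assumption 6 for μ'
    (hA6pos' : ∀ a c : Bool, 0 < μ' {ω | S0' ω = a ∧ Y0' ω = c})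
    (hA6' : ∀ (a b c d : Bool) (g : Fin m), 0 < μ' {ω | S0' ω = a ∧ Y0' ω = c ∧ G' ω = g} →
      condP μ' {ω | S1' ω = b ∧ Y1' ω = d} {ω | S0' ω = a ∧ Y0' ω = c ∧ G' ω = g} =
        condP μ' {ω | S1' ω = b ∧ Y1' ω = d} {ω | S0' ω = a ∧ Y0' ω = c})
    -- Condition 3 for μ and μ'
    (hm4 : 4 ≤ m)
    (hC3 : (Matrix.of fun (g : Fin m) (p : Bool × Bool) =>
      condP μ {ω | S0 ω = p.1 ∧ Y0 ω = p.2} {ω | G ω = g}).rank = 4)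
    (hC3' : (Matrix.of fun (g : Fin m) (p : Bool × Bool) =>
      condP μ' {ω | S0' ω = p.1 ∧ Y0' ω = p.2} {ω | G' ω = g}).rank = 4)
    -- equal observed data distributions
    (hobs : ∀ (g : Fin m) (a s y : Bool),
      μ {ω | G ω = g ∧ A ω = a ∧ S ω = s ∧ Y ω = y} =
        μ' {ω | G' ω = g ∧ A' ω = a ∧ S' ω = s ∧ Y' ω = y}) :
    (∀ (a b c d : Bool) (g : Fin m),
      condP μ {ω | S0 ω = a ∧ S1 ω = b ∧ Y0 ω = c ∧ Y1 ω = d} {ω | G ω = g} =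
        condP μ' {ω | S0' ω = a ∧ S1' ω = b ∧ Y0' ω = c ∧ Y1' ω = d} {ω | G' ω = g}) ∧
    (∀ (a b : Bool) (g : Fin m), 0 < μ {ω | S0 ω = a ∧ S1 ω = b ∧ G ω = g} →
      condP μ {ω | Y1 ω = true} {ω | S0 ω = a ∧ S1 ω = b ∧ G ω = g} -
        condP μ {ω | Y0 ω = true} {ω | S0 ω = a ∧ S1 ω = b ∧ G ω = g} =
      condP μ' {ω | Y1' ω = true} {ω | S0' ω = a ∧ S1' ω = b ∧ G' ω = g} -
        condP μ' {ω | Y0' ω = true} {ω | S0' ω = a ∧ S1' ω = b ∧ G' ω = g}) := by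
  obtain ⟨hM, hR, hmix, hjoint, he, hf2, hg2, hh⟩ :=
    model_facts μ G A S0 S1 Y0 Y1 S Y hGmeas hAmeas hS0meas hS1meas hY0meas hY1meas
      hSdef hYdef hA5pos hA5ov hA5ind hA6
  obtain ⟨hM', hR', hmix', hjoint', he', hf2', hg2', hh'⟩ :=
    model_facts μ' G' A' S0' S1' Y0' Y1' S' Y' hG'meas hA'meas hS0'meas hS1'meas hY0'meas
      hY1'meas hS'def hY'def hA5pos' hA5ov' hA5ind' hA6'
  have hGg : ∀ g, (μ {ω | G ω = g}).toReal = (μ' {ω | G' ω = g}).toReal := by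
    intro g
    rw [hh g, hh' g]
    exact Finset.sum_congr rfl fun q _ => by rw [hobs g q.1 q.2.1 q.2.2]
  have hMeq : ∀ (g : Fin m) (a c : Bool),
      condP μ {ω | S0 ω = a ∧ Y0 ω = c} {ω | G ω = g} =
        condP μ' {ω | S0' ω = a ∧ Y0' ω = c} {ω | G' ω = g} := by
    intro g a c
    rw [hM g a c, hM' g a c, hobs g false a c]
    congr 1
    exact Finset.sum_congr rfl fun p _ => by rw [hobs g false p.1 p.2]
  have hReq : ∀ (g : Fin m) (b d : Bool),
      condP μ {ω | S1 ω = b ∧ Y1 ω = d} {ω | G ω = g} =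
        condP μ' {ω | S1' ω = b ∧ Y1' ω = d} {ω | G' ω = g} := by
    intro g b d
    rw [hR g b d, hR' g b d, hobs g true b d]
    congr 1
    exact Finset.sum_congr rfl fun p _ => by rw [hobs g true p.1 p.2]
  have hinj : ∀ v : Bool × Bool → ℝ,
      (Matrix.of fun (g : Fin m) (p : Bool × Bool) =>
        condP μ {ω | S0 ω = p.1 ∧ Y0 ω = p.2} {ω | G ω = g}).mulVec v = 0 → v = 0 := by
    intro v hv
    set M := Matrix.of fun (g : Fin m) (p : Bool × Bool) =>
        condP μ {ω | S0 ω = p.1 ∧ Y0 ω = p.2} {ω | G ω = g} with hMdef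
    have hr : Module.finrank ℝ (LinearMap.range M.mulVecLin) = 4 := hC3
    have hd : Module.finrank ℝ ((Bool × Bool) → ℝ) = 4 := by
      simp [Module.finrank_fintype_fun_eq_card]
    have hk := LinearMap.finrank_range_add_finrank_ker M.mulVecLin
    have h0 : Module.finrank ℝ (LinearMap.ker M.mulVecLin) = 0 := by omega
    have hbot : LinearMap.ker M.mulVecLin = ⊥ := Submodule.finrank_eq_zero.mp h0
    have hv' : v ∈ LinearMap.ker M.mulVecLin := by
      simpa [Matrix.mulVecLin_apply] using hv
    simpa [hbot] using hv'
  have hθ : ∀ (b d a c : Bool),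
      condP μ {ω | S1 ω = b ∧ Y1 ω = d} {ω | S0 ω = a ∧ Y0 ω = c} =
        condP μ' {ω | S1' ω = b ∧ Y1' ω = d} {ω | S0' ω = a ∧ Y0' ω = c} := by
    intro b d a c
    have hv : (fun p : Bool × Bool =>
        condP μ {ω | S1 ω = b ∧ Y1 ω = d} {ω | S0 ω = p.1 ∧ Y0 ω = p.2} -
          condP μ' {ω | S1' ω = b ∧ Y1' ω = d} {ω | S0' ω = p.1 ∧ Y0' ω = p.2}) = 0 := by
      apply hinj
      funext g
      simp only [Matrix.mulVec, dotProduct, Matrix.of_apply, Pi.zero_apply]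
      have e1 := hmix g b d
      have e2 := hmix' g b d
      have e3 := hReq g b d
      have e4 : ∀ p : Bool × Bool,
          condP μ' {ω | S0' ω = p.1 ∧ Y0' ω = p.2} {ω | G' ω = g} =
            condP μ {ω | S0 ω = p.1 ∧ Y0 ω = p.2} {ω | G ω = g} :=
        fun p => (hMeq g p.1 p.2).symm
      have e2' : condP μ' {ω | S1' ω = b ∧ Y1' ω = d} {ω | G' ω = g} =
          ∑ p : Bool × Bool,
            condP μ' {ω | S1' ω = b ∧ Y1' ω = d} {ω | S0' ω = p.1 ∧ Y0' ω = p.2} *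
              condP μ {ω | S0 ω = p.1 ∧ Y0 ω = p.2} {ω | G ω = g} := by
        rw [e2]
        exact Finset.sum_congr rfl fun p _ => by rw [e4 p]
      calc ∑ p : Bool × Bool,
            condP μ {ω | S0 ω = p.1 ∧ Y0 ω = p.2} {ω | G ω = g} *
              (condP μ {ω | S1 ω = b ∧ Y1 ω = d} {ω | S0 ω = p.1 ∧ Y0 ω = p.2} -
                condP μ' {ω | S1' ω = b ∧ Y1' ω = d} {ω | S0' ω = p.1 ∧ Y0' ω = p.2})
          = (∑ p : Bool × Bool,
              condP μ {ω | S1 ω = b ∧ Y1 ω = d} {ω | S0 ω = p.1 ∧ Y0 ω = p.2} *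
                condP μ {ω | S0 ω = p.1 ∧ Y0 ω = p.2} {ω | G ω = g}) -
            ∑ p : Bool × Bool,
              condP μ' {ω | S1' ω = b ∧ Y1' ω = d} {ω | S0' ω = p.1 ∧ Y0' ω = p.2} *
                condP μ {ω | S0 ω = p.1 ∧ Y0 ω = p.2} {ω | G ω = g} := by
            rw [← Finset.sum_sub_distrib]
            exact Finset.sum_congr rfl fun p _ => by ring
        _ = 0 := by rw [← e1, ← e2', e3, sub_self]
    have := congrFun hv (a, c)
    simpa [sub_eq_zero] using this
  have part1 : ∀ (a b c d : Bool) (g : Fin m),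
      condP μ {ω | S0 ω = a ∧ S1 ω = b ∧ Y0 ω = c ∧ Y1 ω = d} {ω | G ω = g} =
        condP μ' {ω | S0' ω = a ∧ S1' ω = b ∧ Y0' ω = c ∧ Y1' ω = d} {ω | G' ω = g} := by
    intro a b c d g
    rw [hjoint a b c d g, hjoint' a b c d g, hθ b d a c, hMeq g a c]
  refine ⟨part1, ?_⟩
  intro a b g hpos
  have hden : (μ {ω | S0 ω = a ∧ S1 ω = b ∧ G ω = g}).toReal =
      (μ' {ω | S0' ω = a ∧ S1' ω = b ∧ G' ω = g}).toReal := by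
    rw [hg2 a b g, hg2' a b g, hGg g]
    congr 1
    exact Finset.sum_congr rfl fun p _ => part1 a b p.1 p.2 g
  have hnum1 : (μ ({ω | Y1 ω = true} ∩ {ω | S0 ω = a ∧ S1 ω = b ∧ G ω = g})).toReal =
      (μ' ({ω | Y1' ω = true} ∩ {ω | S0' ω = a ∧ S1' ω = b ∧ G' ω = g})).toReal := by
    rw [he a b g, he' a b g, hGg g]
    congr 1
    exact Finset.sum_congr rfl fun c _ => part1 a b c true g
  have hnum0 : (μ ({ω | Y0 ω = true} ∩ {ω | S0 ω = a ∧ S1 ω = b ∧ G ω = g})).toReal =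
      (μ' ({ω | Y0' ω = true} ∩ {ω | S0' ω = a ∧ S1' ω = b ∧ G' ω = g})).toReal := by
    rw [hf2 a b g, hf2' a b g, hGg g]
    congr 1
    exact Finset.sum_congr rfl fun d _ => part1 a b true d g
  unfold condP
  rw [hnum1, hnum0, hden]
end

section
/- Identifiability under double monotonicity with a weaker rank condition (Theorem on thm-add): Suppose two models (Ω, ℱ, μ, G, A, S⁰, S¹, Y⁰, Y¹) and (Ω', ℱ', μ', G', A', S'⁰, S'¹, Y'⁰, Y'¹) each satisfy Assumption 5, Assumption 6, the monotonicity conditions μ(Y¹ ≥ Y⁰) = 1 and μ(S¹ ≥ S⁰) = 1 (and likewise under μ'), and Condition A (both parts (i) and (ii)), and have the same observed data distribution, i.e. μ(G=g, A=a, S=s, Y=y) = μ'(G'=g, A'=a, S'=s, Y'=y) for all g ∈ Fin m and a, s, y ∈ {0,1}. Then for all a, b, c, d ∈ {0,1} and every g: P(S⁰=a, S¹=b, Y⁰=c, Y¹=d | G=g) = P'(S'⁰=a, S'¹=b, Y'⁰=c, Y'¹=d | G'=g); consequently the principal stratification average causal effects PSACE_{ab|g} are identified whenever μ(S⁰=a,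 S¹=b, G=g) > 0. -/
open MeasureTheory ProbabilityTheory

section Aux

variable {Ω : Type*} [MeasurableSpace Ω]

lemma mseq {α : Type*} [MeasurableSpace α] [MeasurableSingletonClass α] {f : Ω → α}
    (hf : Measurable f) (a : α) : MeasurableSet {ω | f ω = a} :=
  hf (measurableSet_singleton a)

lemma nuR_congr (μ : Measure Ω) {P Q : Ω → Prop} (h : ∀ ω, P ω ↔ Q ω) :
    (μ {ω | P ω}).toReal = (μ {ω | Q ω}).toReal := by rw [Set.ext h]

lemma nu_split (μ : Measure Ω) [IsFiniteMeasure μ] {f : Ω → Bool} (hf : Measurable f)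
    {P : Ω → Prop} (hP : MeasurableSet {ω | P ω}) :
    (μ {ω | P ω}).toReal =
      (μ {ω | P ω ∧ f ω = false}).toReal + (μ {ω | P ω ∧ f ω = true}).toReal := by
  have hu : {ω | P ω} = {ω | P ω ∧ f ω = false} ∪ {ω | P ω ∧ f ω = true} := by
    ext ω; simp only [Set.mem_setOf_eq, Set.mem_union]
    cases h : f ω <;> tauto
  have hd : Disjoint {ω | P ω ∧ f ω = false} {ω | P ω ∧ f ω = true} := by
    rw [Set.disjoint_left]; rintro ω ⟨_, h0⟩ ⟨_, h1⟩; rw [h0] at h1; exact Bool.noConfusion h1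
  have hm2 : MeasurableSet {ω | P ω ∧ f ω = true} := hP.inter (mseq hf true)
  rw [hu, measure_union hd hm2, ENNReal.toReal_add (measure_ne_top _ _) (measure_ne_top _ _)]

lemma condP_mul' (μ : Measure Ω) {P Q : Ω → Prop} (hQ : (μ {ω | Q ω}).toReal ≠ 0) :
    (μ {ω | P ω ∧ Q ω}).toReal = condP μ {ω | P ω} {ω | Q ω} * (μ {ω | Q ω}).toReal := by
  have h : {ω | P ω ∧ Q ω} = {ω | P ω} ∩ {ω | Q ω} := rfl
  rw [h, condP]; field_simp

lemma rank_inj {m : ℕ} (M : Matrix (Fin m) (Fin 2) ℝ) (hM : M.rank = 2) {v : Fin 2 → ℝ}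
    (hv : ∀ g, M g 0 * v 0 + M g 1 * v 1 = 0) : v = 0 := by
  have hmv : M.mulVec v = 0 := by
    funext g
    rw [Matrix.mulVec, dotProduct, Fin.sum_univ_two]
    simpa [mul_comm] using hv g
  have hrn := LinearMap.finrank_range_add_finrank_ker M.mulVecLin
  rw [show Module.finrank ℝ (LinearMap.range M.mulVecLin) = M.rank from rfl] at hrn
  rw [hM, Module.finrank_fin_fun] at hrn
  have hker : LinearMap.ker M.mulVecLin = ⊥ := Submodule.finrank_eq_zero.mp (by omega)
  have : v ∈ LinearMap.ker M.mulVecLin := by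
    simpa [LinearMap.mem_ker, Matrix.mulVecLin_apply] using hmv
  simpa [hker] using this

lemma null_of_mono (μ : Measure Ω) [IsProbabilityMeasure μ] {f g : Ω → Bool}
    (hf : Measurable f) (hg : Measurable g) (hmono : μ {ω | f ω ≤ g ω} = 1)
    {E : Set Ω} (hE : ∀ ω ∈ E, f ω = true ∧ g ω = false) : μ E = 0 := by
  have hT : MeasurableSet {ω | f ω ≤ g ω} := by
    have : {ω | f ω ≤ g ω} = {ω | f ω = false} ∪ {ω | g ω = true} := by
      ext ω; cases h : f ω <;> cases h2 : g ω <;> simp [h, h2]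
    rw [this]; exact (mseq hf false).union (mseq hg true)
  refine le_antisymm (le_trans (measure_mono ?_)
    (le_of_eq ((prob_compl_eq_zero_iff hT).mpr hmono))) zero_le
  intro ω hω
  rcases hE ω hω with ⟨h1, h2⟩
  simp [Set.mem_compl_iff, Set.mem_setOf_eq, h1, h2]

end Aux

lemma ident_abstract {m : ℕ}
    (P0 P1 P1' : Fin m → Bool → Bool → ℝ) (q q' : Bool → Bool → Bool → Bool → ℝ)
    (hP1eq : ∀ g b d, P1 g b d = P1' g b d)
    (hmarg : ∀ g b d, P1 g b d = ∑ a : Bool, ∑ c : Bool, P0 g a c * q a c b d)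
    (hmarg' : ∀ g b d, P1' g b d = ∑ a : Bool, ∑ c : Bool, P0 g a c * q' a c b d)
    (hz1 : ∀ c d, q true c false d = 0) (hz2 : ∀ a b, q a true b false = 0)
    (hz1' : ∀ c d, q' true c false d = 0) (hz2' : ∀ a b, q' a true b false = 0)
    (hsum : ∀ a c, ∑ b : Bool, ∑ d : Bool, q a c b d = 1)
    (hsum' : ∀ a c, ∑ b : Bool, ∑ d : Bool, q' a c b d = 1)
    (hinj1 : ∀ x y : ℝ, (∀ g, P0 g false false * x + P0 g false true * y = 0) → x = 0 ∧ y = 0)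
    (hinj2 : ∀ x y : ℝ, (∀ g, P0 g false false * x + P0 g true false * y = 0) → x = 0 ∧ y = 0) :
    ∀ a c b d, q a c b d = q' a c b d := by
  have heq : ∀ g b d, P0 g false false * (q false false b d - q' false false b d)
      + P0 g false true * (q false true b d - q' false true b d)
      + P0 g true false * (q true false b d - q' true false b d)
      + P0 g true true * (q true true b d - q' true true b d) = 0 := by
    intro g b d
    have h1 := hmarg g b d
    have h2 := hmarg' g b d
    have h3 := hP1eq g b d
    simp only [Fintype.sum_bool] at h1 h2
    linear_combination h2 - h1 + h3
  have h00 : q false false false false = q' false false false false := by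
    obtain ⟨hx, -⟩ := hinj1 (q false false false false - q' false false false false) 0
      (fun g => by
        have h := heq g false false
        simp only [hz1, hz2, hz1', hz2'] at h
        linarith)
    linarith
  have h01h02 : q false false false true = q' false false false true ∧
      q false true false true = q' false true false true := by
    obtain ⟨hx, hy⟩ := hinj1 (q false false false true - q' false false false true)
      (q false true false true - q' false true false true)
      (fun g => by
        have h := heq g false true
        simp only [hz1, hz1'] at h
        linarith)
    exact ⟨by linarith, by linarith⟩
  obtain ⟨h01, h02⟩ := h01h02
  have h10h11 : q false false true false = q' false false true false ∧
      q true false true false = q' true false true false := by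
    obtain ⟨hx, hy⟩ := hinj2 (q false false true false - q' false false true false)
      (q true false true false - q' true false true false)
      (fun g => by
        have h := heq g true false
        simp only [hz2, hz2'] at h
        linarith)
    exact ⟨by linarith, by linarith⟩
  obtain ⟨h10, h11⟩ := h10h11
  intro a c b d
  have s00 := hsum false false; have s01 := hsum false true
  have s10 := hsum true false; have s11 := hsum true true
  have s00' := hsum' false false; have s01' := hsum' false true
  have s10' := hsum' true false; have s11' := hsum' true true
  simp only [Fintype.sum_bool] at s00 s01 s10 s11 s00' s01' s10' s11'
  cases a <;> cases c <;> cases b <;> cases d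
  · exact h00
  · exact h01
  · exact h10
  · linarith
  · rw [hz2 false false, hz2' false false]
  · exact h02
  · rw [hz2 false true, hz2' false true]
  · linarith [hz2 false false, hz2' false false, hz2 false true, hz2' false true]
  · rw [hz1 false false, hz1' false false]
  · rw [hz1 false true, hz1' false true]
  · exact h11
  · linarith [hz1 false false, hz1' false false, hz1 false true, hz1' false true]
  · rw [hz1 true false, hz1' true false]
  · rw [hz1 true true, hz1' true true]
  · rw [hz2 true true, hz2' true true]
  · linarith [hz1 true false, hz1' true false, hz1 true true, hz1' true true,
      hz2 true true, hz2' true true]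

section Model

variable {Ω : Type*} [MeasurableSpace Ω]

lemma mF1 (μ : Measure Ω) [IsProbabilityMeasure μ]
    {m : ℕ} (G : Ω → Fin m) (A S0 S1 Y0 Y1 S Y : Ω → Bool)
    (hAmeas : Measurable A) (hS0meas : Measurable S0) (hS1meas : Measurable S1)
    (hY0meas : Measurable Y0) (hY1meas : Measurable Y1) (hGmeas : Measurable G)
    (hSdef : ∀ ω, S ω = bif A ω then S1 ω else S0 ω)
    (hYdef : ∀ ω, Y ω = bif A ω then Y1 ω else Y0 ω)
    (hA5pos : ∀ g : Fin m, 0 < μ {ω | G ω = g})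
    (hA5ind : ∀ (g : Fin m) (a s0 s1 y0 y1 : Bool),
      condP μ {ω | A ω = a ∧ S0 ω = s0 ∧ S1 ω = s1 ∧ Y0 ω = y0 ∧ Y1 ω = y1} {ω | G ω = g} =
        condP μ {ω | A ω = a} {ω | G ω = g} *
          condP μ {ω | S0 ω = s0 ∧ S1 ω = s1 ∧ Y0 ω = y0 ∧ Y1 ω = y1} {ω | G ω = g})
    (g : Fin m) (a c : Bool) :
    (μ {ω | G ω = g ∧ A ω = false ∧ S ω = a ∧ Y ω = c}).toReal =
      condP μ {ω | A ω = false} {ω | G ω = g} *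
        (μ {ω | S0 ω = a ∧ Y0 ω = c ∧ G ω = g}).toReal := by
  have hG : (μ {ω | G ω = g}).toReal ≠ 0 :=
    (ENNReal.toReal_pos (hA5pos g).ne' (measure_ne_top _ _)).ne'
  have atom : ∀ s1 y1 : Bool,
      (μ {ω | A ω = false ∧ S0 ω = a ∧ S1 ω = s1 ∧ Y0 ω = c ∧ Y1 ω = y1 ∧ G ω = g}).toReal =
        condP μ {ω | A ω = false} {ω | G ω = g} *
          (μ {ω | S0 ω = a ∧ S1 ω = s1 ∧ Y0 ω = c ∧ Y1 ω = y1 ∧ G ω = g}).toReal := by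
    intro s1 y1
    rw [nuR_congr μ (Q := fun ω =>
      (A ω = false ∧ S0 ω = a ∧ S1 ω = s1 ∧ Y0 ω = c ∧ Y1 ω = y1) ∧ G ω = g)
      (fun ω => by tauto)]
    rw [condP_mul' μ hG, hA5ind g false a s1 c y1, mul_assoc, ← condP_mul' μ hG]
    exact congrArg _ (nuR_congr μ (fun ω => by tauto))
  have m1 : MeasurableSet {ω | A ω = false ∧ S0 ω = a ∧ Y0 ω = c ∧ G ω = g} :=
    (mseq hAmeas false).inter ((mseq hS0meas a).inter ((mseq hY0meas c).inter (mseq hGmeas g)))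
  have m2 : MeasurableSet {ω | S0 ω = a ∧ Y0 ω = c ∧ G ω = g} :=
    (mseq hS0meas a).inter ((mseq hY0meas c).inter (mseq hGmeas g))
  have hset : {ω | G ω = g ∧ A ω = false ∧ S ω = a ∧ Y ω = c} =
      {ω | A ω = false ∧ S0 ω = a ∧ Y0 ω = c ∧ G ω = g} := by
    ext ω; simp only [Set.mem_setOf_eq, hSdef ω, hYdef ω]
    cases h : A ω <;> simp <;> tauto
  have e1 : ∀ s1 : Bool,
      (μ {ω | (A ω = false ∧ S0 ω = a ∧ Y0 ω = c ∧ G ω = g) ∧ S1 ω = s1}).toReal =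
        condP μ {ω | A ω = false} {ω | G ω = g} *
          (μ {ω | (S0 ω = a ∧ Y0 ω = c ∧ G ω = g) ∧ S1 ω = s1}).toReal := by
    intro s1
    rw [nu_split μ hY1meas (P := fun ω => (A ω = false ∧ S0 ω = a ∧ Y0 ω = c ∧ G ω = g) ∧ S1 ω = s1)
          (by exact m1.inter (mseq hS1meas s1)),
        nu_split μ hY1meas (P := fun ω => (S0 ω = a ∧ Y0 ω = c ∧ G ω = g) ∧ S1 ω = s1)
          (by exact m2.inter (mseq hS1meas s1))]
    rw [nuR_congr μ (Q := fun ω =>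
        A ω = false ∧ S0 ω = a ∧ S1 ω = s1 ∧ Y0 ω = c ∧ Y1 ω = false ∧ G ω = g)
        (fun ω => by tauto) (P := fun ω =>
        ((A ω = false ∧ S0 ω = a ∧ Y0 ω = c ∧ G ω = g) ∧ S1 ω = s1) ∧ Y1 ω = false),
      nuR_congr μ (Q := fun ω =>
        A ω = false ∧ S0 ω = a ∧ S1 ω = s1 ∧ Y0 ω = c ∧ Y1 ω = true ∧ G ω = g)
        (fun ω => by tauto) (P := fun ω =>
        ((A ω = false ∧ S0 ω = a ∧ Y0 ω = c ∧ G ω = g) ∧ S1 ω = s1) ∧ Y1 ω = true),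
      atom s1 false, atom s1 true,
      nuR_congr μ (Q := fun ω =>
        S0 ω = a ∧ S1 ω = s1 ∧ Y0 ω = c ∧ Y1 ω = false ∧ G ω = g)
        (fun ω => by tauto) (P := fun ω =>
        ((S0 ω = a ∧ Y0 ω = c ∧ G ω = g) ∧ S1 ω = s1) ∧ Y1 ω = false),
      nuR_congr μ (Q := fun ω =>
        S0 ω = a ∧ S1 ω = s1 ∧ Y0 ω = c ∧ Y1 ω = true ∧ G ω = g)
        (fun ω => by tauto) (P := fun ω =>
        ((S0 ω = a ∧ Y0 ω = c ∧ G ω = g) ∧ S1 ω = s1) ∧ Y1 ω = true)]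
    ring
  rw [hset, nu_split μ hS1meas (P := fun ω => A ω = false ∧ S0 ω = a ∧ Y0 ω = c ∧ G ω = g) m1,
      e1 false, e1 true,
      nu_split μ hS1meas (P := fun ω => S0 ω = a ∧ Y0 ω = c ∧ G ω = g) m2]
  ring

lemma mF2 (μ : Measure Ω) [IsProbabilityMeasure μ]
    {m : ℕ} (G : Ω → Fin m) (A S0 S1 Y0 Y1 S Y : Ω → Bool)
    (hAmeas : Measurable A) (hS0meas : Measurable S0) (hS1meas : Measurable S1)
    (hY0meas : Measurable Y0) (hY1meas : Measurable Y1) (hGmeas : Measurable G)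
    (hSdef : ∀ ω, S ω = bif A ω then S1 ω else S0 ω)
    (hYdef : ∀ ω, Y ω = bif A ω then Y1 ω else Y0 ω)
    (hA5pos : ∀ g : Fin m, 0 < μ {ω | G ω = g})
    (hA5ind : ∀ (g : Fin m) (a s0 s1 y0 y1 : Bool),
      condP μ {ω | A ω = a ∧ S0 ω = s0 ∧ S1 ω = s1 ∧ Y0 ω = y0 ∧ Y1 ω = y1} {ω | G ω = g} =
        condP μ {ω | A ω = a} {ω | G ω = g} *
          condP μ {ω | S0 ω = s0 ∧ S1 ω = s1 ∧ Y0 ω = y0 ∧ Y1 ω = y1} {ω | G ω = g})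
    (g : Fin m) (b d : Bool) :
    (μ {ω | G ω = g ∧ A ω = true ∧ S ω = b ∧ Y ω = d}).toReal =
      condP μ {ω | A ω = true} {ω | G ω = g} *
        (μ {ω | S1 ω = b ∧ Y1 ω = d ∧ G ω = g}).toReal := by
  have hG : (μ {ω | G ω = g}).toReal ≠ 0 :=
    (ENNReal.toReal_pos (hA5pos g).ne' (measure_ne_top _ _)).ne'
  have atom : ∀ s0 y0 : Bool,
      (μ {ω | A ω = true ∧ S0 ω = s0 ∧ S1 ω = b ∧ Y0 ω = y0 ∧ Y1 ω = d ∧ G ω = g}).toReal =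
        condP μ {ω | A ω = true} {ω | G ω = g} *
          (μ {ω | S0 ω = s0 ∧ S1 ω = b ∧ Y0 ω = y0 ∧ Y1 ω = d ∧ G ω = g}).toReal := by
    intro s0 y0
    rw [nuR_congr μ (Q := fun ω =>
      (A ω = true ∧ S0 ω = s0 ∧ S1 ω = b ∧ Y0 ω = y0 ∧ Y1 ω = d) ∧ G ω = g)
      (fun ω => by tauto)]
    rw [condP_mul' μ hG, hA5ind g true s0 b y0 d, mul_assoc, ← condP_mul' μ hG]
    exact congrArg _ (nuR_congr μ (fun ω => by tauto))
  have m1 : MeasurableSet {ω | A ω = true ∧ S1 ω = b ∧ Y1 ω = d ∧ G ω = g} :=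
    (mseq hAmeas true).inter ((mseq hS1meas b).inter ((mseq hY1meas d).inter (mseq hGmeas g)))
  have m2 : MeasurableSet {ω | S1 ω = b ∧ Y1 ω = d ∧ G ω = g} :=
    (mseq hS1meas b).inter ((mseq hY1meas d).inter (mseq hGmeas g))
  have hset : {ω | G ω = g ∧ A ω = true ∧ S ω = b ∧ Y ω = d} =
      {ω | A ω = true ∧ S1 ω = b ∧ Y1 ω = d ∧ G ω = g} := by
    ext ω; simp only [Set.mem_setOf_eq, hSdef ω, hYdef ω]
    cases h : A ω <;> simp <;> tauto
  have e1 : ∀ s0 : Bool,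
      (μ {ω | (A ω = true ∧ S1 ω = b ∧ Y1 ω = d ∧ G ω = g) ∧ S0 ω = s0}).toReal =
        condP μ {ω | A ω = true} {ω | G ω = g} *
          (μ {ω | (S1 ω = b ∧ Y1 ω = d ∧ G ω = g) ∧ S0 ω = s0}).toReal := by
    intro s0
    rw [nu_split μ hY0meas (P := fun ω => (A ω = true ∧ S1 ω = b ∧ Y1 ω = d ∧ G ω = g) ∧ S0 ω = s0)
          (by exact m1.inter (mseq hS0meas s0)),
        nu_split μ hY0meas (P := fun ω => (S1 ω = b ∧ Y1 ω = d ∧ G ω = g) ∧ S0 ω = s0)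
          (by exact m2.inter (mseq hS0meas s0))]
    rw [nuR_congr μ (Q := fun ω =>
        A ω = true ∧ S0 ω = s0 ∧ S1 ω = b ∧ Y0 ω = false ∧ Y1 ω = d ∧ G ω = g)
        (fun ω => by tauto) (P := fun ω =>
        ((A ω = true ∧ S1 ω = b ∧ Y1 ω = d ∧ G ω = g) ∧ S0 ω = s0) ∧ Y0 ω = false),
      nuR_congr μ (Q := fun ω =>
        A ω = true ∧ S0 ω = s0 ∧ S1 ω = b ∧ Y0 ω = true ∧ Y1 ω = d ∧ G ω = g)
        (fun ω => by tauto) (P := fun ω =>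
        ((A ω = true ∧ S1 ω = b ∧ Y1 ω = d ∧ G ω = g) ∧ S0 ω = s0) ∧ Y0 ω = true),
      atom s0 false, atom s0 true,
      nuR_congr μ (Q := fun ω =>
        S0 ω = s0 ∧ S1 ω = b ∧ Y0 ω = false ∧ Y1 ω = d ∧ G ω = g)
        (fun ω => by tauto) (P := fun ω =>
        ((S1 ω = b ∧ Y1 ω = d ∧ G ω = g) ∧ S0 ω = s0) ∧ Y0 ω = false),
      nuR_congr μ (Q := fun ω =>
        S0 ω = s0 ∧ S1 ω = b ∧ Y0 ω = true ∧ Y1 ω = d ∧ G ω = g)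
        (fun ω => by tauto) (P := fun ω =>
        ((S1 ω = b ∧ Y1 ω = d ∧ G ω = g) ∧ S0 ω = s0) ∧ Y0 ω = true)]
    ring
  rw [hset, nu_split μ hS0meas (P := fun ω => A ω = true ∧ S1 ω = b ∧ Y1 ω = d ∧ G ω = g) m1,
      e1 false, e1 true,
      nu_split μ hS0meas (P := fun ω => S1 ω = b ∧ Y1 ω = d ∧ G ω = g) m2]
  ring

lemma mF3 (μ : Measure Ω) [IsProbabilityMeasure μ]
    {m : ℕ} (G : Ω → Fin m) (S0 S1 Y0 Y1 : Ω → Bool)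
    (hA6 : ∀ (a b c d : Bool) (g : Fin m), 0 < μ {ω | S0 ω = a ∧ Y0 ω = c ∧ G ω = g} →
      condP μ {ω | S1 ω = b ∧ Y1 ω = d} {ω | S0 ω = a ∧ Y0 ω = c ∧ G ω = g} =
        condP μ {ω | S1 ω = b ∧ Y1 ω = d} {ω | S0 ω = a ∧ Y0 ω = c})
    (g : Fin m) (a b c d : Bool) :
    (μ {ω | S0 ω = a ∧ S1 ω = b ∧ Y0 ω = c ∧ Y1 ω = d ∧ G ω = g}).toReal =
      (μ {ω | S0 ω = a ∧ Y0 ω = c ∧ G ω = g}).toReal *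
        condP μ {ω | S1 ω = b ∧ Y1 ω = d} {ω | S0 ω = a ∧ Y0 ω = c} := by
  by_cases h : μ {ω | S0 ω = a ∧ Y0 ω = c ∧ G ω = g} = 0
  · have h1 : μ {ω | S0 ω = a ∧ S1 ω = b ∧ Y0 ω = c ∧ Y1 ω = d ∧ G ω = g} = 0 := by
      refine le_antisymm (le_trans (measure_mono ?_) (le_of_eq h)) zero_le
      intro ω hω; simp only [Set.mem_setOf_eq] at hω ⊢; tauto
    rw [h1, h]; simp
  · have hpos : 0 < μ {ω | S0 ω = a ∧ Y0 ω = c ∧ G ω = g} := zero_lt_iff.mpr h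
    have hF : (μ {ω | S0 ω = a ∧ Y0 ω = c ∧ G ω = g}).toReal ≠ 0 :=
      (ENNReal.toReal_pos h (measure_ne_top _ _)).ne'
    rw [nuR_congr μ (Q := fun ω =>
        (S1 ω = b ∧ Y1 ω = d) ∧ (S0 ω = a ∧ Y0 ω = c ∧ G ω = g)) (fun ω => by tauto)]
    rw [condP_mul' μ hF, hA6 a b c d g hpos, mul_comm]

lemma mF4 (μ : Measure Ω) [IsProbabilityMeasure μ]
    {m : ℕ} (G : Ω → Fin m) (S0 S1 Y0 Y1 : Ω → Bool)
    (hS0meas : Measurable S0) (hS1meas : Measurable S1)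
    (hY0meas : Measurable Y0) (hY1meas : Measurable Y1) (hGmeas : Measurable G)
    (g : Fin m) (b d : Bool) :
    (μ {ω | S1 ω = b ∧ Y1 ω = d ∧ G ω = g}).toReal =
      ∑ a : Bool, ∑ c : Bool,
        (μ {ω | S0 ω = a ∧ S1 ω = b ∧ Y0 ω = c ∧ Y1 ω = d ∧ G ω = g}).toReal := by
  have m2 : MeasurableSet {ω | S1 ω = b ∧ Y1 ω = d ∧ G ω = g} :=
    (mseq hS1meas b).inter ((mseq hY1meas d).inter (mseq hGmeas g))
  have e1 : ∀ a0 : Bool,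
      (μ {ω | (S1 ω = b ∧ Y1 ω = d ∧ G ω = g) ∧ S0 ω = a0}).toReal =
        (μ {ω | S0 ω = a0 ∧ S1 ω = b ∧ Y0 ω = false ∧ Y1 ω = d ∧ G ω = g}).toReal +
        (μ {ω | S0 ω = a0 ∧ S1 ω = b ∧ Y0 ω = true ∧ Y1 ω = d ∧ G ω = g}).toReal := by
    intro a0
    rw [nu_split μ hY0meas (P := fun ω => (S1 ω = b ∧ Y1 ω = d ∧ G ω = g) ∧ S0 ω = a0)
          (by exact m2.inter (mseq hS0meas a0)),
        nuR_congr μ (Q := fun ω =>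
          S0 ω = a0 ∧ S1 ω = b ∧ Y0 ω = false ∧ Y1 ω = d ∧ G ω = g) (fun ω => by tauto)
          (P := fun ω => ((S1 ω = b ∧ Y1 ω = d ∧ G ω = g) ∧ S0 ω = a0) ∧ Y0 ω = false),
        nuR_congr μ (Q := fun ω =>
          S0 ω = a0 ∧ S1 ω = b ∧ Y0 ω = true ∧ Y1 ω = d ∧ G ω = g) (fun ω => by tauto)
          (P := fun ω => ((S1 ω = b ∧ Y1 ω = d ∧ G ω = g) ∧ S0 ω = a0) ∧ Y0 ω = true)]
  rw [nu_split μ hS0meas (P := fun ω => S1 ω = b ∧ Y1 ω = d ∧ G ω = g) m2, e1 false, e1 true]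
  simp [Fintype.sum_bool]; ring

lemma qSum (μ : Measure Ω) [IsProbabilityMeasure μ] (S0 S1 Y0 Y1 : Ω → Bool)
    (hS0meas : Measurable S0) (hS1meas : Measurable S1)
    (hY0meas : Measurable Y0) (hY1meas : Measurable Y1)
    (a c : Bool) (hpos : 0 < μ {ω | S0 ω = a ∧ Y0 ω = c}) :
    ∑ b : Bool, ∑ d : Bool,
      condP μ {ω | S1 ω = b ∧ Y1 ω = d} {ω | S0 ω = a ∧ Y0 ω = c} = 1 := by
  have hF : (μ {ω | S0 ω = a ∧ Y0 ω = c}).toReal ≠ 0 :=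
    (ENNReal.toReal_pos hpos.ne' (measure_ne_top _ _)).ne'
  have mF : MeasurableSet {ω | S0 ω = a ∧ Y0 ω = c} :=
    (mseq hS0meas a).inter (mseq hY0meas c)
  have r : ∀ b d : Bool, {ω | S1 ω = b ∧ Y1 ω = d} ∩ {ω | S0 ω = a ∧ Y0 ω = c} =
      {ω | (S1 ω = b ∧ Y1 ω = d) ∧ (S0 ω = a ∧ Y0 ω = c)} := fun b d => rfl
  have e1 : ∀ b : Bool,
      (μ {ω | (S0 ω = a ∧ Y0 ω = c) ∧ S1 ω = b}).toReal =
        (μ {ω | (S1 ω = b ∧ Y1 ω = false) ∧ (S0 ω = a ∧ Y0 ω = c)}).toReal +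
        (μ {ω | (S1 ω = b ∧ Y1 ω = true) ∧ (S0 ω = a ∧ Y0 ω = c)}).toReal := by
    intro b
    rw [nu_split μ hY1meas (P := fun ω => (S0 ω = a ∧ Y0 ω = c) ∧ S1 ω = b)
          (by exact mF.inter (mseq hS1meas b)),
        nuR_congr μ (Q := fun ω => (S1 ω = b ∧ Y1 ω = false) ∧ (S0 ω = a ∧ Y0 ω = c))
          (fun ω => by tauto) (P := fun ω => ((S0 ω = a ∧ Y0 ω = c) ∧ S1 ω = b) ∧ Y1 ω = false),
        nuR_congr μ (Q := fun ω => (S1 ω = b ∧ Y1 ω = true) ∧ (S0 ω = a ∧ Y0 ω = c))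
          (fun ω => by tauto) (P := fun ω => ((S0 ω = a ∧ Y0 ω = c) ∧ S1 ω = b) ∧ Y1 ω = true)]
  have key : (μ {ω | (S1 ω = false ∧ Y1 ω = false) ∧ (S0 ω = a ∧ Y0 ω = c)}).toReal +
      (μ {ω | (S1 ω = false ∧ Y1 ω = true) ∧ (S0 ω = a ∧ Y0 ω = c)}).toReal +
      (μ {ω | (S1 ω = true ∧ Y1 ω = false) ∧ (S0 ω = a ∧ Y0 ω = c)}).toReal +
      (μ {ω | (S1 ω = true ∧ Y1 ω = true) ∧ (S0 ω = a ∧ Y0 ω = c)}).toReal =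
      (μ {ω | S0 ω = a ∧ Y0 ω = c}).toReal := by
    rw [nu_split μ hS1meas (P := fun ω => S0 ω = a ∧ Y0 ω = c) mF, e1 false, e1 true]
    ring
  simp only [condP, r, Fintype.sum_bool]
  field_simp
  linarith [key]

lemma obsSplitA (μ : Measure Ω) [IsProbabilityMeasure μ] {m : ℕ}
    (G : Ω → Fin m) (A S Y : Ω → Bool)
    (hGmeas : Measurable G) (hAmeas : Measurable A) (hSmeas : Measurable S)
    (hYmeas : Measurable Y) (g : Fin m) (a : Bool) :
    (μ {ω | G ω = g ∧ A ω = a}).toReal = ∑ s : Bool, ∑ y : Bool,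
      (μ {ω | G ω = g ∧ A ω = a ∧ S ω = s ∧ Y ω = y}).toReal := by
  have m1 : MeasurableSet {ω | G ω = g ∧ A ω = a} := (mseq hGmeas g).inter (mseq hAmeas a)
  have e1 : ∀ s : Bool, (μ {ω | (G ω = g ∧ A ω = a) ∧ S ω = s}).toReal =
      (μ {ω | G ω = g ∧ A ω = a ∧ S ω = s ∧ Y ω = false}).toReal +
      (μ {ω | G ω = g ∧ A ω = a ∧ S ω = s ∧ Y ω = true}).toReal := by
    intro s
    rw [nu_split μ hYmeas (P := fun ω => (G ω = g ∧ A ω = a) ∧ S ω = s)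
          (by exact m1.inter (mseq hSmeas s)),
        nuR_congr μ (Q := fun ω => G ω = g ∧ A ω = a ∧ S ω = s ∧ Y ω = false)
          (fun ω => by tauto) (P := fun ω => ((G ω = g ∧ A ω = a) ∧ S ω = s) ∧ Y ω = false),
        nuR_congr μ (Q := fun ω => G ω = g ∧ A ω = a ∧ S ω = s ∧ Y ω = true)
          (fun ω => by tauto) (P := fun ω => ((G ω = g ∧ A ω = a) ∧ S ω = s) ∧ Y ω = true)]
  rw [nu_split μ hSmeas (P := fun ω => G ω = g ∧ A ω = a) m1, e1 false, e1 true]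
  simp [Fintype.sum_bool]; ring

lemma obsSplitG (μ : Measure Ω) [IsProbabilityMeasure μ] {m : ℕ}
    (G : Ω → Fin m) (A S Y : Ω → Bool)
    (hGmeas : Measurable G) (hAmeas : Measurable A) (hSmeas : Measurable S)
    (hYmeas : Measurable Y) (g : Fin m) :
    (μ {ω | G ω = g}).toReal = ∑ a : Bool, ∑ s : Bool, ∑ y : Bool,
      (μ {ω | G ω = g ∧ A ω = a ∧ S ω = s ∧ Y ω = y}).toReal := by
  rw [nu_split μ hAmeas (P := fun ω => G ω = g) (mseq hGmeas g),
      obsSplitA μ G A S Y hGmeas hAmeas hSmeas hYmeas g false,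
      obsSplitA μ G A S Y hGmeas hAmeas hSmeas hYmeas g true]
  simp [Fintype.sum_bool]; ring

lemma part2den (μ : Measure Ω) [IsProbabilityMeasure μ] {m : ℕ}
    (G : Ω → Fin m) (S0 S1 Y0 Y1 : Ω → Bool)
    (hS0meas : Measurable S0) (hS1meas : Measurable S1)
    (hY0meas : Measurable Y0) (hY1meas : Measurable Y1) (hGmeas : Measurable G)
    (g : Fin m) (a b : Bool) :
    (μ {ω | S0 ω = a ∧ S1 ω = b ∧ G ω = g}).toReal =
      (μ {ω | S0 ω = a ∧ S1 ω = b ∧ Y0 ω = false ∧ Y1 ω = false ∧ G ω = g}).toReal +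
      (μ {ω | S0 ω = a ∧ S1 ω = b ∧ Y0 ω = false ∧ Y1 ω = true ∧ G ω = g}).toReal +
      (μ {ω | S0 ω = a ∧ S1 ω = b ∧ Y0 ω = true ∧ Y1 ω = false ∧ G ω = g}).toReal +
      (μ {ω | S0 ω = a ∧ S1 ω = b ∧ Y0 ω = true ∧ Y1 ω = true ∧ G ω = g}).toReal := by
  have m1 : MeasurableSet {ω | S0 ω = a ∧ S1 ω = b ∧ G ω = g} :=
    (mseq hS0meas a).inter ((mseq hS1meas b).inter (mseq hGmeas g))
  have e1 : ∀ c : Bool, (μ {ω | (S0 ω = a ∧ S1 ω = b ∧ G ω = g) ∧ Y0 ω = c}).toReal =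
      (μ {ω | S0 ω = a ∧ S1 ω = b ∧ Y0 ω = c ∧ Y1 ω = false ∧ G ω = g}).toReal +
      (μ {ω | S0 ω = a ∧ S1 ω = b ∧ Y0 ω = c ∧ Y1 ω = true ∧ G ω = g}).toReal := by
    intro c
    rw [nu_split μ hY1meas (P := fun ω => (S0 ω = a ∧ S1 ω = b ∧ G ω = g) ∧ Y0 ω = c)
          (by exact m1.inter (mseq hY0meas c)),
        nuR_congr μ (Q := fun ω => S0 ω = a ∧ S1 ω = b ∧ Y0 ω = c ∧ Y1 ω = false ∧ G ω = g)
          (fun ω => by tauto)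
          (P := fun ω => ((S0 ω = a ∧ S1 ω = b ∧ G ω = g) ∧ Y0 ω = c) ∧ Y1 ω = false),
        nuR_congr μ (Q := fun ω => S0 ω = a ∧ S1 ω = b ∧ Y0 ω = c ∧ Y1 ω = true ∧ G ω = g)
          (fun ω => by tauto)
          (P := fun ω => ((S0 ω = a ∧ S1 ω = b ∧ G ω = g) ∧ Y0 ω = c) ∧ Y1 ω = true)]
  rw [nu_split μ hY0meas (P := fun ω => S0 ω = a ∧ S1 ω = b ∧ G ω = g) m1, e1 false, e1 true]
  ring

lemma part2num1 (μ : Measure Ω) [IsProbabilityMeasure μ] {m : ℕ}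
    (G : Ω → Fin m) (S0 S1 Y0 Y1 : Ω → Bool)
    (hS0meas : Measurable S0) (hS1meas : Measurable S1)
    (hY0meas : Measurable Y0) (hY1meas : Measurable Y1) (hGmeas : Measurable G)
    (g : Fin m) (a b : Bool) :
    (μ ({ω | Y1 ω = true} ∩ {ω | S0 ω = a ∧ S1 ω = b ∧ G ω = g})).toReal =
      (μ {ω | S0 ω = a ∧ S1 ω = b ∧ Y0 ω = false ∧ Y1 ω = true ∧ G ω = g}).toReal +
      (μ {ω | S0 ω = a ∧ S1 ω = b ∧ Y0 ω = true ∧ Y1 ω = true ∧ G ω = g}).toReal := by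
  have m1 : MeasurableSet {ω | (S0 ω = a ∧ S1 ω = b ∧ G ω = g) ∧ Y1 ω = true} :=
    ((mseq hS0meas a).inter ((mseq hS1meas b).inter (mseq hGmeas g))).inter (mseq hY1meas true)
  have r : {ω | Y1 ω = true} ∩ {ω | S0 ω = a ∧ S1 ω = b ∧ G ω = g} =
      {ω | (S0 ω = a ∧ S1 ω = b ∧ G ω = g) ∧ Y1 ω = true} := by
    ext ω; simp only [Set.mem_inter_iff, Set.mem_setOf_eq]; tauto
  rw [r, nu_split μ hY0meas (P := fun ω => (S0 ω = a ∧ S1 ω = b ∧ G ω = g) ∧ Y1 ω = true) m1,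
      nuR_congr μ (Q := fun ω => S0 ω = a ∧ S1 ω = b ∧ Y0 ω = false ∧ Y1 ω = true ∧ G ω = g)
        (fun ω => by tauto)
        (P := fun ω => ((S0 ω = a ∧ S1 ω = b ∧ G ω = g) ∧ Y1 ω = true) ∧ Y0 ω = false),
      nuR_congr μ (Q := fun ω => S0 ω = a ∧ S1 ω = b ∧ Y0 ω = true ∧ Y1 ω = true ∧ G ω = g)
        (fun ω => by tauto)
        (P := fun ω => ((S0 ω = a ∧ S1 ω = b ∧ G ω = g) ∧ Y1 ω = true) ∧ Y0 ω = true)]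

lemma part2num0 (μ : Measure Ω) [IsProbabilityMeasure μ] {m : ℕ}
    (G : Ω → Fin m) (S0 S1 Y0 Y1 : Ω → Bool)
    (hS0meas : Measurable S0) (hS1meas : Measurable S1)
    (hY0meas : Measurable Y0) (hY1meas : Measurable Y1) (hGmeas : Measurable G)
    (g : Fin m) (a b : Bool) :
    (μ ({ω | Y0 ω = true} ∩ {ω | S0 ω = a ∧ S1 ω = b ∧ G ω = g})).toReal =
      (μ {ω | S0 ω = a ∧ S1 ω = b ∧ Y0 ω = true ∧ Y1 ω = false ∧ G ω = g}).toReal +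
      (μ {ω | S0 ω = a ∧ S1 ω = b ∧ Y0 ω = true ∧ Y1 ω = true ∧ G ω = g}).toReal := by
  have m1 : MeasurableSet {ω | (S0 ω = a ∧ S1 ω = b ∧ G ω = g) ∧ Y0 ω = true} :=
    ((mseq hS0meas a).inter ((mseq hS1meas b).inter (mseq hGmeas g))).inter (mseq hY0meas true)
  have r : {ω | Y0 ω = true} ∩ {ω | S0 ω = a ∧ S1 ω = b ∧ G ω = g} =
      {ω | (S0 ω = a ∧ S1 ω = b ∧ G ω = g) ∧ Y0 ω = true} := by
    ext ω; simp only [Set.mem_inter_iff, Set.mem_setOf_eq]; tauto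
  rw [r, nu_split μ hY1meas (P := fun ω => (S0 ω = a ∧ S1 ω = b ∧ G ω = g) ∧ Y0 ω = true) m1,
      nuR_congr μ (Q := fun ω => S0 ω = a ∧ S1 ω = b ∧ Y0 ω = true ∧ Y1 ω = false ∧ G ω = g)
        (fun ω => by tauto)
        (P := fun ω => ((S0 ω = a ∧ S1 ω = b ∧ G ω = g) ∧ Y0 ω = true) ∧ Y1 ω = false),
      nuR_congr μ (Q := fun ω => S0 ω = a ∧ S1 ω = b ∧ Y0 ω = true ∧ Y1 ω = true ∧ G ω = g)
        (fun ω => by tauto)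
        (P := fun ω => ((S0 ω = a ∧ S1 ω = b ∧ G ω = g) ∧ Y0 ω = true) ∧ Y1 ω = true)]

end Model

/-- **Identifiability under double monotonicity with a weaker rank condition.**
Under Assumption 5, Assumption 6, the monotonicity conditions `Y¹ ≥ Y⁰` and `S¹ ≥ S⁰`
(almost surely), and Condition A (both parts), the joint distributions
`P(S⁰, S¹, Y⁰, Y¹ | G = g)` are identified from the observed data distribution;
consequently the principal stratification average causal effects `PSACE_{ab|g}` are
identified whenever `μ(S⁰=a, S¹=b, G=g) > 0`. -/
theorem stmt6
    {Ω Ω' : Type*} [MeasurableSpace Ω] [MeasurableSpace Ω']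
    (μ : Measure Ω) (μ' : Measure Ω')
    [IsProbabilityMeasure μ] [IsProbabilityMeasure μ']
    {m : ℕ} (hm : 1 ≤ m)
    (G : Ω → Fin m) (A S0 S1 Y0 Y1 S Y : Ω → Bool)
    (G' : Ω' → Fin m) (A' S0' S1' Y0' Y1' S' Y' : Ω' → Bool)
    (hGmeas : Measurable G) (hAmeas : Measurable A)
    (hS0meas : Measurable S0) (hS1meas : Measurable S1)
    (hY0meas : Measurable Y0) (hY1meas : Measurable Y1)
    (hG'meas : Measurable G') (hA'meas : Measurable A')
    (hS0'meas : Measurable S0') (hS1'meas : Measurable S1')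
    (hY0'meas : Measurable Y0') (hY1'meas : Measurable Y1')
    (hSdef : ∀ ω, S ω = bif A ω then S1 ω else S0 ω)
    (hYdef : ∀ ω, Y ω = bif A ω then Y1 ω else Y0 ω)
    (hS'def : ∀ ω, S' ω = bif A' ω then S1' ω else S0' ω)
    (hY'def : ∀ ω, Y' ω = bif A' ω then Y1' ω else Y0' ω)
    -- Assumption 5 for μ
    (hA5pos : ∀ g : Fin m, 0 < μ {ω | G ω = g})
    (hA5ov : ∀ g : Fin m, 0 < condP μ {ω | A ω = true} {ω | G ω = g} ∧
        condP μ {ω | A ω = true} {ω | G ω = g} < 1)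
    (hA5ind : ∀ (g : Fin m) (a s0 s1 y0 y1 : Bool),
      condP μ {ω | A ω = a ∧ S0 ω = s0 ∧ S1 ω = s1 ∧ Y0 ω = y0 ∧ Y1 ω = y1} {ω | G ω = g} =
        condP μ {ω | A ω = a} {ω | G ω = g} *
          condP μ {ω | S0 ω = s0 ∧ S1 ω = s1 ∧ Y0 ω = y0 ∧ Y1 ω = y1} {ω | G ω = g})
    -- Assumption 5 for μ'
    (hA5pos' : ∀ g : Fin m, 0 < μ' {ω | G' ω = g})
    (hA5ov' : ∀ g : Fin m, 0 < condP μ' {ω | A' ω = true} {ω | G' ω = g} ∧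
        condP μ' {ω | A' ω = true} {ω | G' ω = g} < 1)
    (hA5ind' : ∀ (g : Fin m) (a s0 s1 y0 y1 : Bool),
      condP μ' {ω | A' ω = a ∧ S0' ω = s0 ∧ S1' ω = s1 ∧ Y0' ω = y0 ∧ Y1' ω = y1}
          {ω | G' ω = g} =
        condP μ' {ω | A' ω = a} {ω | G' ω = g} *
          condP μ' {ω | S0' ω = s0 ∧ S1' ω = s1 ∧ Y0' ω = y0 ∧ Y1' ω = y1} {ω | G' ω = g})
    -- Assumption 6 for μ
    (hA6pos : ∀ a c : Bool, 0 < μ {ω | S0 ω = a ∧ Y0 ω = c})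
    (hA6 : ∀ (a b c d : Bool) (g : Fin m), 0 < μ {ω | S0 ω = a ∧ Y0 ω = c ∧ G ω = g} →
      condP μ {ω | S1 ω = b ∧ Y1 ω = d} {ω | S0 ω = a ∧ Y0 ω = c ∧ G ω = g} =
        condP μ {ω | S1 ω = b ∧ Y1 ω = d} {ω | S0 ω = a ∧ Y0 ω = c})
    -- Assumption 6 for μ'
    (hA6pos' : ∀ a c : Bool, 0 < μ' {ω | S0' ω = a ∧ Y0' ω = c})
    (hA6' : ∀ (a b c d : Bool) (g : Fin m), 0 < μ' {ω | S0' ω = a ∧ Y0' ω = c ∧ G' ω = g} →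
      condP μ' {ω | S1' ω = b ∧ Y1' ω = d} {ω | S0' ω = a ∧ Y0' ω = c ∧ G' ω = g} =
        condP μ' {ω | S1' ω = b ∧ Y1' ω = d} {ω | S0' ω = a ∧ Y0' ω = c})
    -- monotonicity conditions for μ and μ'
    (hmonoY : μ {ω | Y0 ω ≤ Y1 ω} = 1)
    (hmonoS : μ {ω | S0 ω ≤ S1 ω} = 1)
    (hmonoY' : μ' {ω | Y0' ω ≤ Y1' ω} = 1)
    (hmonoS' : μ' {ω | S0' ω ≤ S1' ω} = 1)
    -- Condition A (parts (i) and (ii)) for μ and μ'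
    (hCAi : (Matrix.of fun (g : Fin m) (j : Fin 2) =>
      condP μ {ω | S0 ω = false ∧ Y0 ω = (j = 1 : Bool)} {ω | G ω = g}).rank = 2)
    (hCAii : (Matrix.of fun (g : Fin m) (j : Fin 2) =>
      condP μ {ω | S0 ω = (j = 1 : Bool) ∧ Y0 ω = false} {ω | G ω = g}).rank = 2)
    (hCAi' : (Matrix.of fun (g : Fin m) (j : Fin 2) =>
      condP μ' {ω | S0' ω = false ∧ Y0' ω = (j = 1 : Bool)} {ω | G' ω = g}).rank = 2)
    (hCAii' : (Matrix.of fun (g : Fin m) (j : Fin 2) =>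
      condP μ' {ω | S0' ω = (j = 1 : Bool) ∧ Y0' ω = false} {ω | G' ω = g}).rank = 2)
    -- equal observed data distributions
    (hobs : ∀ (g : Fin m) (a s y : Bool),
      μ {ω | G ω = g ∧ A ω = a ∧ S ω = s ∧ Y ω = y} =
        μ' {ω | G' ω = g ∧ A' ω = a ∧ S' ω = s ∧ Y' ω = y}) :
    (∀ (a b c d : Bool) (g : Fin m),
      condP μ {ω | S0 ω = a ∧ S1 ω = b ∧ Y0 ω = c ∧ Y1 ω = d} {ω | G ω = g} =
        condP μ' {ω | S0' ω = a ∧ S1' ω = b ∧ Y0' ω = c ∧ Y1' ω = d} {ω | G' ω = g}) ∧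
    (∀ (a b : Bool) (g : Fin m), 0 < μ {ω | S0 ω = a ∧ S1 ω = b ∧ G ω = g} →
      condP μ {ω | Y1 ω = true} {ω | S0 ω = a ∧ S1 ω = b ∧ G ω = g} -
        condP μ {ω | Y0 ω = true} {ω | S0 ω = a ∧ S1 ω = b ∧ G ω = g} =
      condP μ' {ω | Y1' ω = true} {ω | S0' ω = a ∧ S1' ω = b ∧ G' ω = g} -
        condP μ' {ω | Y0' ω = true} {ω | S0' ω = a ∧ S1' ω = b ∧ G' ω = g}) := by
  -- measurability of the observed S, Y
  have hSmeas : Measurable S := by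
    have hfe : S = fun ω => if A ω = true then S1 ω else S0 ω := by
      funext ω; rw [hSdef ω]; cases A ω <;> simp
    rw [hfe]; exact Measurable.ite (mseq hAmeas true) hS1meas hS0meas
  have hYmeas : Measurable Y := by
    have hfe : Y = fun ω => if A ω = true then Y1 ω else Y0 ω := by
      funext ω; rw [hYdef ω]; cases A ω <;> simp
    rw [hfe]; exact Measurable.ite (mseq hAmeas true) hY1meas hY0meas
  have hS'meas : Measurable S' := by
    have hfe : S' = fun ω => if A' ω = true then S1' ω else S0' ω := by
      funext ω; rw [hS'def ω]; cases A' ω <;> simp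
    rw [hfe]; exact Measurable.ite (mseq hA'meas true) hS1'meas hS0'meas
  have hY'meas : Measurable Y' := by
    have hfe : Y' = fun ω => if A' ω = true then Y1' ω else Y0' ω := by
      funext ω; rw [hY'def ω]; cases A' ω <;> simp
    rw [hfe]; exact Measurable.ite (mseq hA'meas true) hY1'meas hY0'meas
  have hνG : ∀ g, (μ {ω | G ω = g}).toReal ≠ 0 := fun g =>
    (ENNReal.toReal_pos (hA5pos g).ne' (measure_ne_top _ _)).ne'
  have hνG' : ∀ g, (μ' {ω | G' ω = g}).toReal ≠ 0 := fun g =>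
    (ENNReal.toReal_pos (hA5pos' g).ne' (measure_ne_top _ _)).ne'
  have hobsR : ∀ (g : Fin m) (a s y : Bool),
      (μ {ω | G ω = g ∧ A ω = a ∧ S ω = s ∧ Y ω = y}).toReal =
      (μ' {ω | G' ω = g ∧ A' ω = a ∧ S' ω = s ∧ Y' ω = y}).toReal := fun g a s y => by
    rw [hobs g a s y]
  have hνGeq : ∀ g, (μ {ω | G ω = g}).toReal = (μ' {ω | G' ω = g}).toReal := by
    intro g
    rw [obsSplitG μ G A S Y hGmeas hAmeas hSmeas hYmeas g,
        obsSplitG μ' G' A' S' Y' hG'meas hA'meas hS'meas hY'meas g]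
    exact Finset.sum_congr rfl fun a _ => Finset.sum_congr rfl fun s _ =>
      Finset.sum_congr rfl fun y _ => hobsR g a s y
  have hnumA : ∀ (aa : Bool) (g : Fin m),
      (μ ({ω | A ω = aa} ∩ {ω | G ω = g})).toReal = (μ {ω | G ω = g ∧ A ω = aa}).toReal := by
    intro aa g
    rw [show ({ω | A ω = aa} ∩ {ω | G ω = g}) = {ω | G ω = g ∧ A ω = aa} from
      Set.ext fun ω => by simp only [Set.mem_inter_iff, Set.mem_setOf_eq]; tauto]
  have hnumA' : ∀ (aa : Bool) (g : Fin m),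
      (μ' ({ω | A' ω = aa} ∩ {ω | G' ω = g})).toReal = (μ' {ω | G' ω = g ∧ A' ω = aa}).toReal := by
    intro aa g
    rw [show ({ω | A' ω = aa} ∩ {ω | G' ω = g}) = {ω | G' ω = g ∧ A' ω = aa} from
      Set.ext fun ω => by simp only [Set.mem_inter_iff, Set.mem_setOf_eq]; tauto]
  have hcA : ∀ (aa : Bool) (g : Fin m),
      condP μ {ω | A ω = aa} {ω | G ω = g} = condP μ' {ω | A' ω = aa} {ω | G' ω = g} := by
    intro aa g
    simp only [condP]
    rw [hnumA aa g, hnumA' aa g, obsSplitA μ G A S Y hGmeas hAmeas hSmeas hYmeas g aa,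
        obsSplitA μ' G' A' S' Y' hG'meas hA'meas hS'meas hY'meas g aa, ← hνGeq g]
    congr 1
    exact Finset.sum_congr rfl fun s _ => Finset.sum_congr rfl fun y _ => hobsR g aa s y
  have hcA1 : ∀ g, condP μ {ω | A ω = true} {ω | G ω = g} ≠ 0 := fun g => (hA5ov g).1.ne'
  have hc01 : ∀ g, condP μ {ω | A ω = false} {ω | G ω = g} =
      1 - condP μ {ω | A ω = true} {ω | G ω = g} := by
    intro g
    have hx : (μ ({ω | A ω = false} ∩ {ω | G ω = g})).toReal +
        (μ ({ω | A ω = true} ∩ {ω | G ω = g})).toReal = (μ {ω | G ω = g}).toReal := by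
      rw [hnumA false g, hnumA true g, ← nu_split μ hAmeas (P := fun ω => G ω = g) (mseq hGmeas g)]
    simp only [condP]
    have hg := hνG g
    field_simp
    linarith [hx]
  have hcA0 : ∀ g, condP μ {ω | A ω = false} {ω | G ω = g} ≠ 0 := by
    intro g; rw [hc01 g]
    exact (by linarith [(hA5ov g).2] : (0:ℝ) < 1 - condP μ {ω | A ω = true} {ω | G ω = g}).ne'
  have hP0eq : ∀ (g : Fin m) (a c : Bool),
      (μ {ω | S0 ω = a ∧ Y0 ω = c ∧ G ω = g}).toReal =
      (μ' {ω | S0' ω = a ∧ Y0' ω = c ∧ G' ω = g}).toReal := by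
    intro g a c
    have h1 := mF1 μ G A S0 S1 Y0 Y1 S Y hAmeas hS0meas hS1meas hY0meas hY1meas hGmeas
      hSdef hYdef hA5pos hA5ind g a c
    have h2 := mF1 μ' G' A' S0' S1' Y0' Y1' S' Y' hA'meas hS0'meas hS1'meas hY0'meas hY1'meas
      hG'meas hS'def hY'def hA5pos' hA5ind' g a c
    rw [hobsR g false a c, h2, ← hcA false g] at h1
    exact (mul_left_cancel₀ (hcA0 g) h1).symm
  have hP1eq : ∀ (g : Fin m) (b d : Bool),
      (μ {ω | S1 ω = b ∧ Y1 ω = d ∧ G ω = g}).toReal =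
      (μ' {ω | S1' ω = b ∧ Y1' ω = d ∧ G' ω = g}).toReal := by
    intro g b d
    have h1 := mF2 μ G A S0 S1 Y0 Y1 S Y hAmeas hS0meas hS1meas hY0meas hY1meas hGmeas
      hSdef hYdef hA5pos hA5ind g b d
    have h2 := mF2 μ' G' A' S0' S1' Y0' Y1' S' Y' hA'meas hS0'meas hS1'meas hY0'meas hY1'meas
      hG'meas hS'def hY'def hA5pos' hA5ind' g b d
    rw [hobsR g true b d, h2, ← hcA true g] at h1
    exact (mul_left_cancel₀ (hcA1 g) h1).symm
  have hmarg : ∀ (g : Fin m) (b d : Bool),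
      (μ {ω | S1 ω = b ∧ Y1 ω = d ∧ G ω = g}).toReal = ∑ a : Bool, ∑ c : Bool,
        (μ {ω | S0 ω = a ∧ Y0 ω = c ∧ G ω = g}).toReal *
          condP μ {ω | S1 ω = b ∧ Y1 ω = d} {ω | S0 ω = a ∧ Y0 ω = c} := by
    intro g b d
    rw [mF4 μ G S0 S1 Y0 Y1 hS0meas hS1meas hY0meas hY1meas hGmeas g b d]
    exact Finset.sum_congr rfl fun a _ => Finset.sum_congr rfl fun c _ =>
      mF3 μ G S0 S1 Y0 Y1 hA6 g a b c d
  have hmargP : ∀ (g : Fin m) (b d : Bool),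
      (μ' {ω | S1' ω = b ∧ Y1' ω = d ∧ G' ω = g}).toReal = ∑ a : Bool, ∑ c : Bool,
        (μ {ω | S0 ω = a ∧ Y0 ω = c ∧ G ω = g}).toReal *
          condP μ' {ω | S1' ω = b ∧ Y1' ω = d} {ω | S0' ω = a ∧ Y0' ω = c} := by
    intro g b d
    rw [mF4 μ' G' S0' S1' Y0' Y1' hS0'meas hS1'meas hY0'meas hY1'meas hG'meas g b d]
    refine Finset.sum_congr rfl fun a _ => Finset.sum_congr rfl fun c _ => ?_
    rw [mF3 μ' G' S0' S1' Y0' Y1' hA6' g a b c d, hP0eq g a c]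
  have hz1 : ∀ c d : Bool,
      condP μ {ω | S1 ω = false ∧ Y1 ω = d} {ω | S0 ω = true ∧ Y0 ω = c} = 0 := by
    intro c d
    have h0 : μ ({ω | S1 ω = false ∧ Y1 ω = d} ∩ {ω | S0 ω = true ∧ Y0 ω = c}) = 0 :=
      null_of_mono μ hS0meas hS1meas hmonoS (fun ω hω => ⟨hω.2.1, hω.1.1⟩)
    simp [condP, h0]
  have hz2 : ∀ a b : Bool,
      condP μ {ω | S1 ω = b ∧ Y1 ω = false} {ω | S0 ω = a ∧ Y0 ω = true} = 0 := by
    intro a b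
    have h0 : μ ({ω | S1 ω = b ∧ Y1 ω = false} ∩ {ω | S0 ω = a ∧ Y0 ω = true}) = 0 :=
      null_of_mono μ hY0meas hY1meas hmonoY (fun ω hω => ⟨hω.2.2, hω.1.2⟩)
    simp [condP, h0]
  have hz1' : ∀ c d : Bool,
      condP μ' {ω | S1' ω = false ∧ Y1' ω = d} {ω | S0' ω = true ∧ Y0' ω = c} = 0 := by
    intro c d
    have h0 : μ' ({ω | S1' ω = false ∧ Y1' ω = d} ∩ {ω | S0' ω = true ∧ Y0' ω = c}) = 0 :=
      null_of_mono μ' hS0'meas hS1'meas hmonoS' (fun ω hω => ⟨hω.2.1, hω.1.1⟩)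
    simp [condP, h0]
  have hz2' : ∀ a b : Bool,
      condP μ' {ω | S1' ω = b ∧ Y1' ω = false} {ω | S0' ω = a ∧ Y0' ω = true} = 0 := by
    intro a b
    have h0 : μ' ({ω | S1' ω = b ∧ Y1' ω = false} ∩ {ω | S0' ω = a ∧ Y0' ω = true}) = 0 :=
      null_of_mono μ' hY0'meas hY1'meas hmonoY' (fun ω hω => ⟨hω.2.2, hω.1.2⟩)
    simp [condP, h0]
  have hsum := fun a c => qSum μ S0 S1 Y0 Y1 hS0meas hS1meas hY0meas hY1meas a c (hA6pos a c)
  have hsum' := fun a c =>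
    qSum μ' S0' S1' Y0' Y1' hS0'meas hS1'meas hY0'meas hY1'meas a c (hA6pos' a c)
  have hcondP0 : ∀ (a c : Bool) (g : Fin m),
      condP μ {ω | S0 ω = a ∧ Y0 ω = c} {ω | G ω = g} * (μ {ω | G ω = g}).toReal =
        (μ {ω | S0 ω = a ∧ Y0 ω = c ∧ G ω = g}).toReal := by
    intro a c g
    rw [← condP_mul' μ (hνG g) (P := fun ω => S0 ω = a ∧ Y0 ω = c) (Q := fun ω => G ω = g)]
    exact nuR_congr μ (fun ω => by tauto)
  have hinj1 : ∀ x y : ℝ,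
      (∀ g, (μ {ω | S0 ω = false ∧ Y0 ω = false ∧ G ω = g}).toReal * x +
        (μ {ω | S0 ω = false ∧ Y0 ω = true ∧ G ω = g}).toReal * y = 0) → x = 0 ∧ y = 0 := by
    intro x y hxy
    have hv : (![x, y] : Fin 2 → ℝ) = 0 := by
      refine rank_inj _ hCAi ?_
      intro g
      simp only [Matrix.of_apply, Matrix.cons_val_zero, Matrix.cons_val_one, Matrix.head_cons]
      have e0 := hcondP0 false false g
      have e1 := hcondP0 false true g
      have h := hxy g
      show condP μ {ω | S0 ω = false ∧ Y0 ω = false} {ω | G ω = g} * x +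
           condP μ {ω | S0 ω = false ∧ Y0 ω = true} {ω | G ω = g} * y = 0
      refine mul_left_cancel₀ (hνG g) ?_
      rw [mul_zero]
      linear_combination x * e0 + y * e1 + h
    exact ⟨by simpa using congrFun hv 0, by simpa using congrFun hv 1⟩
  have hinj2 : ∀ x y : ℝ,
      (∀ g, (μ {ω | S0 ω = false ∧ Y0 ω = false ∧ G ω = g}).toReal * x +
        (μ {ω | S0 ω = true ∧ Y0 ω = false ∧ G ω = g}).toReal * y = 0) → x = 0 ∧ y = 0 := by
    intro x y hxy
    have hv : (![x, y] : Fin 2 → ℝ) = 0 := by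
      refine rank_inj _ hCAii ?_
      intro g
      simp only [Matrix.of_apply, Matrix.cons_val_zero, Matrix.cons_val_one, Matrix.head_cons]
      have e0 := hcondP0 false false g
      have e1 := hcondP0 true false g
      have h := hxy g
      show condP μ {ω | S0 ω = false ∧ Y0 ω = false} {ω | G ω = g} * x +
           condP μ {ω | S0 ω = true ∧ Y0 ω = false} {ω | G ω = g} * y = 0
      refine mul_left_cancel₀ (hνG g) ?_
      rw [mul_zero]
      linear_combination x * e0 + y * e1 + h
    exact ⟨by simpa using congrFun hv 0, by simpa using congrFun hv 1⟩
  have hq : ∀ a c b d : Bool,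
      condP μ {ω | S1 ω = b ∧ Y1 ω = d} {ω | S0 ω = a ∧ Y0 ω = c} =
      condP μ' {ω | S1' ω = b ∧ Y1' ω = d} {ω | S0' ω = a ∧ Y0' ω = c} :=
    ident_abstract (fun g a c => (μ {ω | S0 ω = a ∧ Y0 ω = c ∧ G ω = g}).toReal)
      (fun g b d => (μ {ω | S1 ω = b ∧ Y1 ω = d ∧ G ω = g}).toReal)
      (fun g b d => (μ' {ω | S1' ω = b ∧ Y1' ω = d ∧ G' ω = g}).toReal)
      (fun a c b d => condP μ {ω | S1 ω = b ∧ Y1 ω = d} {ω | S0 ω = a ∧ Y0 ω = c})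
      (fun a c b d => condP μ' {ω | S1' ω = b ∧ Y1' ω = d} {ω | S0' ω = a ∧ Y0' ω = c})
      hP1eq hmarg hmargP hz1 hz2 hz1' hz2' hsum hsum' hinj1 hinj2
  have hJeq : ∀ (g : Fin m) (a b c d : Bool),
      (μ {ω | S0 ω = a ∧ S1 ω = b ∧ Y0 ω = c ∧ Y1 ω = d ∧ G ω = g}).toReal =
      (μ' {ω | S0' ω = a ∧ S1' ω = b ∧ Y0' ω = c ∧ Y1' ω = d ∧ G' ω = g}).toReal := by
    intro g a b c d
    rw [mF3 μ G S0 S1 Y0 Y1 hA6 g a b c d, mF3 μ' G' S0' S1' Y0' Y1' hA6' g a b c d,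
        hP0eq g a c, hq a c b d]
  constructor
  · intro a b c d g
    simp only [condP]
    rw [show ({ω | S0 ω = a ∧ S1 ω = b ∧ Y0 ω = c ∧ Y1 ω = d} ∩ {ω | G ω = g}) =
        {ω | S0 ω = a ∧ S1 ω = b ∧ Y0 ω = c ∧ Y1 ω = d ∧ G ω = g} from
        Set.ext fun ω => by simp only [Set.mem_inter_iff, Set.mem_setOf_eq]; tauto,
      show ({ω | S0' ω = a ∧ S1' ω = b ∧ Y0' ω = c ∧ Y1' ω = d} ∩ {ω | G' ω = g}) =
        {ω | S0' ω = a ∧ S1' ω = b ∧ Y0' ω = c ∧ Y1' ω = d ∧ G' ω = g} from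
        Set.ext fun ω => by simp only [Set.mem_inter_iff, Set.mem_setOf_eq]; tauto,
      hJeq g a b c d, hνGeq g]
  · intro a b g _
    have h1 : condP μ {ω | Y1 ω = true} {ω | S0 ω = a ∧ S1 ω = b ∧ G ω = g} =
        condP μ' {ω | Y1' ω = true} {ω | S0' ω = a ∧ S1' ω = b ∧ G' ω = g} := by
      simp only [condP]
      rw [part2num1 μ G S0 S1 Y0 Y1 hS0meas hS1meas hY0meas hY1meas hGmeas g a b,
          part2num1 μ' G' S0' S1' Y0' Y1' hS0'meas hS1'meas hY0'meas hY1'meas hG'meas g a b,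
          part2den μ G S0 S1 Y0 Y1 hS0meas hS1meas hY0meas hY1meas hGmeas g a b,
          part2den μ' G' S0' S1' Y0' Y1' hS0'meas hS1'meas hY0'meas hY1'meas hG'meas g a b,
          hJeq g a b false false, hJeq g a b false true, hJeq g a b true false,
          hJeq g a b true true]
    have h0 : condP μ {ω | Y0 ω = true} {ω | S0 ω = a ∧ S1 ω = b ∧ G ω = g} =
        condP μ' {ω | Y0' ω = true} {ω | S0' ω = a ∧ S1' ω = b ∧ G' ω = g} := by
      simp only [condP]
      rw [part2num0 μ G S0 S1 Y0 Y1 hS0meas hS1meas hY0meas hY1meas hGmeas g a b,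
          part2num0 μ' G' S0' S1' Y0' Y1' hS0'meas hS1'meas hY0'meas hY1'meas hG'meas g a b,
          part2den μ G S0 S1 Y0 Y1 hS0meas hS1meas hY0meas hY1meas hGmeas g a b,
          part2den μ' G' S0' S1' Y0' Y1' hS0'meas hS1'meas hY0'meas hY1'meas hG'meas g a b,
          hJeq g a b false false, hJeq g a b false true, hJeq g a b true false,
          hJeq g a b true true]
    rw [h1, h0]
end
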